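/- arXiv:2210.02711 — 5 statements merged into one kernel-verified Lean document; each statement's English description precedes it below -/
import Mathlib

section
/- For every natural number n, the graph G contains n pairwise vertex-disjoint H-minors. -/
open SimpleGraph

/-- A model (inflated copy) of `X` in `G`: pairwise disjoint nonempty connected branch
sets `B v`, one for each vertex `v` of `X`, such that for every edge `v w` of `X` there is
an edge of `G` between `B v` and `B w`. -/
structure IsMinorModel {α β : Type*} (X : SimpleGraph α) (G : SimpleGraph β)
    (B : α → Set β) : Prop where
  nonempty : ∀ v, (B v).Nonempty
  connected : ∀ v, (G.induce (B v)).Connected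
  pairwise_disjoint : ∀ ⦃v w⦄, v ≠ w → Disjoint (B v) (B w)
  adj : ∀ ⦃v w⦄, X.Adj v w → ∃ x ∈ B v, ∃ y ∈ B w, G.Adj x y

/-- An `ι`-indexed family of pairwise vertex-disjoint models of `X` in `G`. -/
def DisjointModels {α β ι : Type*} (X : SimpleGraph α) (G : SimpleGraph β)
    (B : ι → α → Set β) : Prop :=
  (∀ k, IsMinorModel X G (B k)) ∧
    ∀ ⦃k l⦄, k ≠ l → Disjoint (⋃ v, B k v) (⋃ v, B l v)

/-- `X` is ubiquitous (w.r.t. the minor relation): every graph containing `n` pairwise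
vertex-disjoint `X`-minors for every `n` contains infinitely many pairwise
vertex-disjoint `X`-minors. -/
def Ubiquitous {α : Type*} (X : SimpleGraph α) : Prop :=
  ∀ ⦃β : Type⦄ (G : SimpleGraph β),
    (∀ n : ℕ, ∃ B : Fin n → α → Set β, DisjointModels X G B) →
    ∃ B : ℕ → α → Set β, DisjointModels X G B

/-- The ray: the one-way infinite path on `ℕ`. -/
def Ray : SimpleGraph ℕ := SimpleGraph.fromRel (fun n m => m = n + 1)

/-- The complete graph `K₅`. -/
abbrev K5 : SimpleGraph (Fin 5) := ⊤

/-- The complete bipartite graph `K₃,₃`. -/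
abbrev K33 : SimpleGraph (Fin 3 ⊕ Fin 3) := completeBipartiteGraph (Fin 3) (Fin 3)

/-- Vertices of the 1-sum `I` of `K₅` and `K₃,₃`: the five vertices of `K₅` (with
`Sum.inl 0` the identified vertex, which is also a vertex of the left side of `K₃,₃`),
plus the two remaining left-side vertices and the three right-side vertices of `K₃,₃`. -/
abbrev IV : Type := Fin 5 ⊕ (Fin 2 ⊕ Fin 3)

def IRel : IV → IV → Prop
  | Sum.inl _, Sum.inl _ => True
  | Sum.inl i, Sum.inr (Sum.inr _) => i = 0
  | Sum.inr (Sum.inl _), Sum.inr (Sum.inr _) => True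
  | _, _ => False

/-- The graph `I`: the 1-sum of `K₅` and `K₃,₃`, identifying one vertex of each. -/
def GraphI : SimpleGraph IV := SimpleGraph.fromRel IRel

/-- The graph `H`: the disjoint union of `I` and a ray. -/
def GraphH : SimpleGraph (IV ⊕ ℕ) := GraphI ⊕g Ray

def GridRel (p q : ℤ × ℕ) : Prop :=
  (q.1 = p.1 + 1 ∧ q.2 = p.2) ∨ (q.1 = p.1 ∧ q.2 = p.2 + 1)

/-- The half-grid on `ℤ × ℕ`: vertices adjacent iff they differ by exactly `1` in one
coordinate and agree in the other. -/
def HalfGrid : SimpleGraph (ℤ × ℕ) := SimpleGraph.fromRel GridRel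

abbrev NegInt : Type := {a : ℤ // a < 0}
abbrev NonnegInt : Type := {b : ℤ // 0 ≤ b}

/-- Vertices of `G`: the half-grid vertices, plus for each `a < 0` four new vertices
(completing the `K₅` attached at `(a,0)`), plus for each `b ≥ 0` five new vertices
(completing the `K₃,₃` attached at `(b,0)`; the new vertices `0, 1` together with
`(b,0)` form the left side and the new vertices `2, 3, 4` form the right side). -/
abbrev GV : Type := (ℤ × ℕ) ⊕ ((NegInt × Fin 4) ⊕ (NonnegInt × Fin 5))

def GRel : GV → GV → Prop
  | Sum.inl p, Sum.inl q => GridRel p q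
  | Sum.inl p, Sum.inr (Sum.inl w) => p = (w.1.1, 0)
  | Sum.inl p, Sum.inr (Sum.inr w) => p = (w.1.1, 0) ∧ 2 ≤ (w.2 : ℕ)
  | Sum.inr (Sum.inl w), Sum.inr (Sum.inl w') => w.1 = w'.1
  | Sum.inr (Sum.inr w), Sum.inr (Sum.inr w') => w.1 = w'.1 ∧ (w.2 : ℕ) < 2 ∧ 2 ≤ (w'.2 : ℕ)
  | _, _ => False

/-- The graph `G`: the half-grid with a `K₅` attached at each `(a,0)`, `a < 0`, and a
`K₃,₃` attached at each `(b,0)`, `b ≥ 0`. -/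
def GraphG : SimpleGraph GV := SimpleGraph.fromRel GRel

/-- The vertex set of the attached copy of `K₅` at `(a, 0)`. -/
def K5copy (a : NegInt) : Set GV :=
  {Sum.inl (a.1, 0)} ∪ {x | ∃ i : Fin 4, x = Sum.inr (Sum.inl (a, i))}

/-- The vertex set of the attached copy of `K₃,₃` at `(b, 0)`. -/
def K33copy (b : NonnegInt) : Set GV :=
  {Sum.inl (b.1, 0)} ∪ {x | ∃ i : Fin 5, x = Sum.inr (Sum.inr (b, i))}

/- ================= auxiliary constructions ================= -/

/-- Attachment vertex data for the `K₅` at `-(k+1)`. -/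
def negk (k : ℕ) : NegInt := ⟨-((k : ℤ) + 1), by omega⟩

/-- Attachment vertex data for the `K₃,₃` at `k`. -/
def posk (k : ℕ) : NonnegInt := ⟨(k : ℤ), by omega⟩

/-- The walk parametrizing the `k`-th arch: up column `-(k+1)` to height `k`,
right along row `k` to column `k`, down column `k`. -/
def archFun (k : ℕ) : ℕ → GV := fun j =>
  if j ≤ k then Sum.inl (-((k : ℤ) + 1), j)
  else if j ≤ 3 * k + 1 then Sum.inl (-((k : ℤ) + 1) + (j : ℤ) - (k : ℤ), k)
  else Sum.inl ((k : ℤ), 4 * k + 1 - j)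

/-- The `k`-th arch as a vertex set. -/
def Arch (k : ℕ) : Set GV := archFun k '' Set.Iic (4 * k + 1)

/-- The branch sets of the `k`-th model (inside a family of `n` models). -/
def modelB (n k : ℕ) : (IV ⊕ ℕ) → Set GV
  | Sum.inl (Sum.inl i) =>
      if i.val = 0 then Arch k
      else {Sum.inr (Sum.inl (negk k, ⟨i.val - 1, by have := i.isLt; omega⟩))}
  | Sum.inl (Sum.inr (Sum.inl s)) =>
      {Sum.inr (Sum.inr (posk k, ⟨s.val, by have := s.isLt; omega⟩))}
  | Sum.inl (Sum.inr (Sum.inr t)) =>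
      {Sum.inr (Sum.inr (posk k, ⟨t.val + 2, by have := t.isLt; omega⟩))}
  | Sum.inr m => {Sum.inl ((n : ℤ) + (k : ℤ), m)}

lemma GraphG_adj_of {x y : GV} (hne : x ≠ y) (h : GRel x y ∨ GRel y x) :
    GraphG.Adj x y := by
  rw [GraphG, SimpleGraph.fromRel_adj]; exact ⟨hne, h⟩

lemma grid_adj {p q : ℤ × ℕ} (hne : p ≠ q) (h : GridRel p q ∨ GridRel q p) :
    GraphG.Adj (Sum.inl p) (Sum.inl q) :=
  GraphG_adj_of (by simpa using hne) h

lemma arch_zero (k : ℕ) : archFun k 0 = Sum.inl (-((k : ℤ) + 1), 0) := by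
  simp [archFun]

lemma arch_last (k : ℕ) : archFun k (4 * k + 1) = Sum.inl ((k : ℤ), 0) := by
  unfold archFun
  split_ifs with h1 h2
  · omega
  · have hk : k = 0 := by omega
    subst hk; norm_num
  · norm_num

lemma arch_zero_mem (k : ℕ) : Sum.inl (-((k : ℤ) + 1), (0 : ℕ)) ∈ Arch k :=
  ⟨0, by simp, arch_zero k⟩

lemma arch_last_mem (k : ℕ) : Sum.inl ((k : ℤ), (0 : ℕ)) ∈ Arch k :=
  ⟨4 * k + 1, by simp, arch_last k⟩

lemma arch_desc {k : ℕ} {x : GV} (hx : x ∈ Arch k) :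
    ∃ p : ℤ × ℕ, x = Sum.inl p ∧ -((k : ℤ) + 1) ≤ p.1 ∧ p.1 ≤ (k : ℤ) ∧ p.2 ≤ k ∧
      (p.1 = -((k : ℤ) + 1) ∨ p.1 = (k : ℤ) ∨ p.2 = k) := by
  obtain ⟨j, hj, rfl⟩ := hx
  simp only [Set.mem_Iic] at hj
  unfold archFun
  split_ifs with h1 h2
  · exact ⟨_, rfl, by omega, by omega, by simpa using h1, Or.inl rfl⟩
  · exact ⟨_, rfl, by simp; omega, by simp; omega, le_refl _, Or.inr (Or.inr rfl)⟩
  · exact ⟨_, rfl, by omega, le_refl _, by simp; omega, Or.inr (Or.inl rfl)⟩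

lemma arch_chain (k : ℕ) : ∀ j, j < 4 * k + 1 →
    GraphG.Adj (archFun k j) (archFun k (j + 1)) := by
  intro j hj
  unfold archFun
  split_ifs with c1 d1 d2 c2 d1' d2' d1'' d2'' <;>
    (try omega) <;>
    refine grid_adj (by simp only [ne_eq, Prod.mk.injEq, not_and]; omega)
      (by unfold GridRel; dsimp only; omega)

lemma chain_connected {β : Type*} (G : SimpleGraph β) (g : ℕ → β) (N : ℕ)
    (h : ∀ j, j < N → G.Adj (g j) (g (j + 1))) :
    (G.induce (g '' Set.Iic N)).Connected := by
  rw [connected_iff]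
  have h0 : g 0 ∈ g '' Set.Iic N := ⟨0, by simp, rfl⟩
  refine ⟨?_, ⟨⟨g 0, h0⟩⟩⟩
  have key : ∀ j (hj : j ≤ N),
      (G.induce (g '' Set.Iic N)).Reachable ⟨g 0, h0⟩ ⟨g j, ⟨j, hj, rfl⟩⟩ := by
    intro j
    induction j with
    | zero => intro _; exact Reachable.refl _
    | succ j ih =>
        intro hj
        have hr := ih (by omega)
        exact hr.trans (SimpleGraph.Adj.reachable (h j (by omega)))
  rintro ⟨x, hx⟩ ⟨y, hy⟩
  obtain ⟨j, hj, rfl⟩ := hx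
  obtain ⟨i, hi, rfl⟩ := hy
  exact (key j hj).symm.trans (key i hi)

lemma singleton_connected {β : Type*} (G : SimpleGraph β) (x : β) :
    (G.induce {x}).Connected := by
  rw [connected_iff]
  refine ⟨fun a b => ?_, ⟨⟨x, rfl⟩⟩⟩
  have : a = b := Subtype.ext (by rw [a.2, b.2])
  rw [this]

lemma arch_connected (k : ℕ) : (GraphG.induce (Arch k)).Connected :=
  chain_connected GraphG (archFun k) (4 * k + 1) (arch_chain k)

/- ================= disjointness helpers ================= -/

lemma arch_disj_inr (k : ℕ) (y : (NegInt × Fin 4) ⊕ (NonnegInt × Fin 5)) :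
    Disjoint (Arch k) {Sum.inr y} := by
  rw [Set.disjoint_right]
  rintro x rfl hx
  obtain ⟨p, hp, -⟩ := arch_desc hx
  simp at hp

lemma arch_disj_ray {n k : ℕ} (hk : k < n) (m : ℕ) :
    Disjoint (Arch k) {Sum.inl ((n : ℤ) + (k : ℤ), m)} := by
  rw [Set.disjoint_right]
  rintro x rfl hx
  obtain ⟨p, hp, -, h2, -, -⟩ := arch_desc hx
  obtain rfl := Sum.inl.inj hp
  simp only at h2
  omega

/-- Description of all vertices used by model `k`. -/
lemma modelB_desc (n k : ℕ) {x : GV} (hx : ∃ v, x ∈ modelB n k v) :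
    (∃ p : ℤ × ℕ, x = Sum.inl p ∧
      ((-((k : ℤ) + 1) ≤ p.1 ∧ p.1 ≤ (k : ℤ) ∧ p.2 ≤ k ∧
        (p.1 = -((k : ℤ) + 1) ∨ p.1 = (k : ℤ) ∨ p.2 = k)) ∨ p.1 = (n : ℤ) + (k : ℤ))) ∨
    (∃ i, x = Sum.inr (Sum.inl (negk k, i))) ∨
    (∃ i, x = Sum.inr (Sum.inr (posk k, i))) := by
  obtain ⟨v, hv⟩ := hx
  rcases v with (i | (s | t)) | m
  · by_cases hi : i.val = 0
    · simp only [modelB, hi, if_pos] at hv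
      obtain ⟨p, rfl, h1, h2, h3, h4⟩ := arch_desc hv
      exact Or.inl ⟨p, rfl, Or.inl ⟨h1, h2, h3, h4⟩⟩
    · simp only [modelB, hi, if_neg, Set.mem_singleton_iff] at hv
      exact Or.inr (Or.inl ⟨_, hv⟩)
  · exact Or.inr (Or.inr ⟨_, hv⟩)
  · exact Or.inr (Or.inr ⟨_, hv⟩)
  · exact Or.inl ⟨((n : ℤ) + (k : ℤ), m), hv, Or.inr rfl⟩

lemma modelB_cross {n k l : ℕ} (hk : k < n) (hl : l < n) (hkl : k ≠ l) :
    Disjoint (⋃ v, modelB n k v) (⋃ v, modelB n l v) := by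
  rw [Set.disjoint_left]
  rintro x hxk hxl
  rw [Set.mem_iUnion] at hxk hxl
  rcases modelB_desc n k hxk with ⟨p, rfl, hp⟩ | ⟨i, rfl⟩ | ⟨i, rfl⟩ <;>
    rcases modelB_desc n l hxl with ⟨q, hq, hq2⟩ | ⟨i', hq⟩ | ⟨i', hq⟩ <;>
      simp only [Sum.inl.injEq, Sum.inr.injEq, Prod.mk.injEq, negk, posk,
        Subtype.mk.injEq, reduceCtorEq] at hq
  · obtain rfl := hq
    omega
  · obtain ⟨⟨h1, -⟩, -⟩ := hq
    omega
  · obtain ⟨⟨h1, -⟩, -⟩ := hq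
    omega

/- ================= unfolding lemmas for modelB ================= -/

lemma modelB_k5_zero (n k : ℕ) {i : Fin 5} (hi : i.val = 0) :
    modelB n k (Sum.inl (Sum.inl i)) = Arch k := by
  simp only [modelB]; rw [if_pos hi]

lemma modelB_k5_ne (n k : ℕ) {i : Fin 5} (hi : ¬i.val = 0) :
    modelB n k (Sum.inl (Sum.inl i)) =
      {Sum.inr (Sum.inl (negk k, ⟨i.val - 1, by have := i.isLt; omega⟩))} := by
  simp only [modelB]; rw [if_neg hi]

lemma modelB_left (n k : ℕ) (s : Fin 2) :
    modelB n k (Sum.inl (Sum.inr (Sum.inl s))) =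
      {Sum.inr (Sum.inr (posk k, ⟨s.val, by have := s.isLt; omega⟩))} := rfl

lemma modelB_right (n k : ℕ) (t : Fin 3) :
    modelB n k (Sum.inl (Sum.inr (Sum.inr t))) =
      {Sum.inr (Sum.inr (posk k, ⟨t.val + 2, by have := t.isLt; omega⟩))} := rfl

lemma modelB_ray (n k : ℕ) (m : ℕ) :
    modelB n k (Sum.inr m) = {Sum.inl ((n : ℤ) + (k : ℤ), m)} := rfl


/- GRel introduction helpers (definitional). -/
lemma GRel_k5 (p : ℤ × ℕ) (w : NegInt × Fin 4) (h : p = (w.1.1, 0)) :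
    GRel (Sum.inl p) (Sum.inr (Sum.inl w)) := h

lemma GRel_k5k5 (w w' : NegInt × Fin 4) (h : w.1 = w'.1) :
    GRel (Sum.inr (Sum.inl w)) (Sum.inr (Sum.inl w')) := h

lemma GRel_k33 (p : ℤ × ℕ) (w : NonnegInt × Fin 5) (h : p = (w.1.1, 0) ∧ 2 ≤ (w.2 : ℕ)) :
    GRel (Sum.inl p) (Sum.inr (Sum.inr w)) := h

lemma GRel_k33k33 (w w' : NonnegInt × Fin 5)
    (h : w.1 = w'.1 ∧ (w.2 : ℕ) < 2 ∧ 2 ≤ (w'.2 : ℕ)) :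
    GRel (Sum.inr (Sum.inr w)) (Sum.inr (Sum.inr w')) := h

/- ================= the model ================= -/

lemma modelB_isModel (n k : ℕ) (hk : k < n) :
    IsMinorModel GraphH GraphG (modelB n k) := by
  constructor
  · -- nonempty
    rintro ((i | (s | t)) | m)
    · by_cases hi : i.val = 0
      · rw [modelB_k5_zero n k hi]; exact ⟨_, arch_zero_mem k⟩
      · rw [modelB_k5_ne n k hi]; exact Set.singleton_nonempty _
    · exact Set.singleton_nonempty _
    · exact Set.singleton_nonempty _
    · exact Set.singleton_nonempty _
  · -- connected
    rintro ((i | (s | t)) | m)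
    · by_cases hi : i.val = 0
      · rw [modelB_k5_zero n k hi]; exact arch_connected k
      · rw [modelB_k5_ne n k hi]; exact singleton_connected _ _
    · exact singleton_connected _ _
    · exact singleton_connected _ _
    · exact singleton_connected _ _
  · -- pairwise disjoint
    rintro ((i | (s | t)) | m) ((i' | (s' | t')) | m') hne
    · -- K5 / K5
      have hii : i ≠ i' := fun h => hne (by rw [h])
      by_cases hi : i.val = 0 <;> by_cases hi' : i'.val = 0
      · exact absurd (Fin.ext (hi.trans hi'.symm)) hii
      · rw [modelB_k5_zero n k hi, modelB_k5_ne n k hi']; exact arch_disj_inr k _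
      · rw [modelB_k5_ne n k hi, modelB_k5_zero n k hi']; exact (arch_disj_inr k _).symm
      · rw [modelB_k5_ne n k hi, modelB_k5_ne n k hi', Set.disjoint_singleton]
        have : i.val ≠ i'.val := fun h => hii (Fin.ext h)
        simp only [ne_eq, Sum.inr.injEq, Sum.inl.injEq, Prod.mk.injEq, Fin.mk.injEq, not_and]
        intro _
        omega
    · -- K5 / K33 left
      rw [modelB_left]
      by_cases hi : i.val = 0
      · rw [modelB_k5_zero n k hi]; exact arch_disj_inr k _
      · rw [modelB_k5_ne n k hi, Set.disjoint_singleton]; simp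
    · -- K5 / K33 right
      rw [modelB_right]
      by_cases hi : i.val = 0
      · rw [modelB_k5_zero n k hi]; exact arch_disj_inr k _
      · rw [modelB_k5_ne n k hi, Set.disjoint_singleton]; simp
    · -- K5 / ray
      rw [modelB_ray]
      by_cases hi : i.val = 0
      · rw [modelB_k5_zero n k hi]; exact arch_disj_ray hk m'
      · rw [modelB_k5_ne n k hi, Set.disjoint_singleton]; simp
    · -- K33 left / K5
      rw [modelB_left]
      by_cases hi' : i'.val = 0
      · rw [modelB_k5_zero n k hi']; exact (arch_disj_inr k _).symm
      · rw [modelB_k5_ne n k hi', Set.disjoint_singleton]; simp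
    · -- K33 left / K33 left
      have hss : s ≠ s' := fun h => hne (by rw [h])
      rw [modelB_left, modelB_left, Set.disjoint_singleton]
      have : s.val ≠ s'.val := fun h => hss (Fin.ext h)
      simp only [ne_eq, Sum.inr.injEq, Prod.mk.injEq, Fin.mk.injEq, not_and]
      intro _
      omega
    · -- K33 left / K33 right
      rw [modelB_left, modelB_right, Set.disjoint_singleton]
      simp only [ne_eq, Sum.inr.injEq, Prod.mk.injEq, Fin.mk.injEq, not_and]
      intro _
      have := s.isLt
      omega
    · -- K33 left / ray
      rw [modelB_left, modelB_ray, Set.disjoint_singleton]; simp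
    · -- K33 right / K5
      rw [modelB_right]
      by_cases hi' : i'.val = 0
      · rw [modelB_k5_zero n k hi']; exact (arch_disj_inr k _).symm
      · rw [modelB_k5_ne n k hi', Set.disjoint_singleton]; simp
    · -- K33 right / K33 left
      rw [modelB_right, modelB_left, Set.disjoint_singleton]
      simp only [ne_eq, Sum.inr.injEq, Prod.mk.injEq, Fin.mk.injEq, not_and]
      intro _
      have := s'.isLt
      omega
    · -- K33 right / K33 right
      have htt : t ≠ t' := fun h => hne (by rw [h])
      rw [modelB_right, modelB_right, Set.disjoint_singleton]
      have : t.val ≠ t'.val := fun h => htt (Fin.ext h)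
      simp only [ne_eq, Sum.inr.injEq, Prod.mk.injEq, Fin.mk.injEq, not_and]
      intro _
      omega
    · -- K33 right / ray
      rw [modelB_right, modelB_ray, Set.disjoint_singleton]; simp
    · -- ray / K5
      rw [modelB_ray]
      by_cases hi' : i'.val = 0
      · rw [modelB_k5_zero n k hi']; exact (arch_disj_ray hk m).symm
      · rw [modelB_k5_ne n k hi', Set.disjoint_singleton]; simp
    · -- ray / K33 left
      rw [modelB_ray, modelB_left, Set.disjoint_singleton]; simp
    · -- ray / K33 right
      rw [modelB_ray, modelB_right, Set.disjoint_singleton]; simp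
    · -- ray / ray
      have hmm : m ≠ m' := fun h => hne (by rw [h])
      rw [modelB_ray, modelB_ray, Set.disjoint_singleton]
      simp only [ne_eq, Sum.inl.injEq, Prod.mk.injEq, not_and]
      omega
  · -- adjacency
    rintro ((i | (s | t)) | m) ((i' | (s' | t')) | m') hvw
    · -- K5 / K5
      have hI : GraphI.Adj (Sum.inl i) (Sum.inl i') := hvw
      rw [GraphI, SimpleGraph.fromRel_adj] at hI
      obtain ⟨hne, -⟩ := hI
      have hii : i ≠ i' := fun h => hne (by rw [h])
      have hvv : i.val ≠ i'.val := fun h => hii (Fin.ext h)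
      by_cases hi : i.val = 0 <;> by_cases hi' : i'.val = 0
      · exact absurd (Fin.ext (hi.trans hi'.symm)) hii
      · refine ⟨Sum.inl (-((k : ℤ) + 1), 0), ?_,
          Sum.inr (Sum.inl (negk k, ⟨i'.val - 1, by have := i'.isLt; omega⟩)), ?_, ?_⟩
        · rw [modelB_k5_zero n k hi]; exact arch_zero_mem k
        · rw [modelB_k5_ne n k hi']; rfl
        · exact GraphG_adj_of (by simp) (Or.inl (GRel_k5 _ _ rfl))
      · refine ⟨Sum.inr (Sum.inl (negk k, ⟨i.val - 1, by have := i.isLt; omega⟩)), ?_,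
          Sum.inl (-((k : ℤ) + 1), 0), ?_, ?_⟩
        · rw [modelB_k5_ne n k hi]; rfl
        · rw [modelB_k5_zero n k hi']; exact arch_zero_mem k
        · exact (GraphG_adj_of (by simp) (Or.inl (GRel_k5 _ _ rfl))).symm
      · refine ⟨Sum.inr (Sum.inl (negk k, ⟨i.val - 1, by have := i.isLt; omega⟩)), ?_,
          Sum.inr (Sum.inl (negk k, ⟨i'.val - 1, by have := i'.isLt; omega⟩)), ?_, ?_⟩
        · rw [modelB_k5_ne n k hi]; rfl
        · rw [modelB_k5_ne n k hi']; rfl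
        · refine GraphG_adj_of ?_ (Or.inl (GRel_k5k5 _ _ rfl))
          simp only [ne_eq, Sum.inr.injEq, Sum.inl.injEq, Prod.mk.injEq, Fin.mk.injEq, not_and]
          intro _
          omega
    · -- K5 / K33 left : no edge in I
      have hI : GraphI.Adj (Sum.inl i) (Sum.inr (Sum.inl s')) := hvw
      rw [GraphI, SimpleGraph.fromRel_adj] at hI
      obtain ⟨-, h⟩ := hI
      rcases h with h | h <;> exact h.elim
    · -- K5 / K33 right
      have hI : GraphI.Adj (Sum.inl i) (Sum.inr (Sum.inr t')) := hvw
      rw [GraphI, SimpleGraph.fromRel_adj] at hI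
      obtain ⟨-, h⟩ := hI
      have hi : i = 0 := by rcases h with h | h; exacts [h, h.elim]
      have hi0 : i.val = 0 := by rw [hi]; rfl
      refine ⟨Sum.inl ((k : ℤ), 0), ?_,
        Sum.inr (Sum.inr (posk k, ⟨t'.val + 2, by have := t'.isLt; omega⟩)), rfl, ?_⟩
      · rw [modelB_k5_zero n k hi0]; exact arch_last_mem k
      · exact GraphG_adj_of (by simp) (Or.inl (GRel_k33 _ _ ⟨rfl, Nat.le_add_left 2 t'.val⟩))
    · -- K5 / ray : no edge in H
      simp [GraphH, SimpleGraph.sum_adj] at hvw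
    · -- K33 left / K5 : no edge
      have hI : GraphI.Adj (Sum.inr (Sum.inl s)) (Sum.inl i') := hvw
      rw [GraphI, SimpleGraph.fromRel_adj] at hI
      obtain ⟨-, h⟩ := hI
      rcases h with h | h <;> exact h.elim
    · -- K33 left / K33 left : no edge
      have hI : GraphI.Adj (Sum.inr (Sum.inl s)) (Sum.inr (Sum.inl s')) := hvw
      rw [GraphI, SimpleGraph.fromRel_adj] at hI
      obtain ⟨-, h⟩ := hI
      rcases h with h | h <;> exact h.elim
    · -- K33 left / K33 right
      refine ⟨Sum.inr (Sum.inr (posk k, ⟨s.val, by have := s.isLt; omega⟩)), rfl,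
        Sum.inr (Sum.inr (posk k, ⟨t'.val + 2, by have := t'.isLt; omega⟩)), rfl, ?_⟩
      refine GraphG_adj_of ?_ (Or.inl (GRel_k33k33 _ _ ⟨rfl, s.isLt, Nat.le_add_left 2 t'.val⟩))
      simp only [ne_eq, Sum.inr.injEq, Prod.mk.injEq, Fin.mk.injEq, not_and]
      intro _
      have := s.isLt
      omega
    · -- K33 left / ray : no edge
      simp [GraphH, SimpleGraph.sum_adj] at hvw
    · -- K33 right / K5
      have hI : GraphI.Adj (Sum.inr (Sum.inr t)) (Sum.inl i') := hvw
      rw [GraphI, SimpleGraph.fromRel_adj] at hI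
      obtain ⟨-, h⟩ := hI
      have hi : i' = 0 := by rcases h with h | h; exacts [h.elim, h]
      have hi0 : i'.val = 0 := by rw [hi]; rfl
      refine ⟨Sum.inr (Sum.inr (posk k, ⟨t.val + 2, by have := t.isLt; omega⟩)), rfl,
        Sum.inl ((k : ℤ), 0), ?_, ?_⟩
      · rw [modelB_k5_zero n k hi0]; exact arch_last_mem k
      · exact (GraphG_adj_of (by simp) (Or.inl (GRel_k33 ((k : ℤ), 0)
          (posk k, ⟨t.val + 2, by have := t.isLt; omega⟩)
          ⟨rfl, Nat.le_add_left 2 t.val⟩))).symm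
    · -- K33 right / K33 left
      refine ⟨Sum.inr (Sum.inr (posk k, ⟨t.val + 2, by have := t.isLt; omega⟩)), rfl,
        Sum.inr (Sum.inr (posk k, ⟨s'.val, by have := s'.isLt; omega⟩)), rfl, ?_⟩
      refine (GraphG_adj_of ?_ (Or.inl (GRel_k33k33
        (posk k, ⟨s'.val, by have := s'.isLt; omega⟩)
        (posk k, ⟨t.val + 2, by have := t.isLt; omega⟩)
        ⟨rfl, s'.isLt, Nat.le_add_left 2 t.val⟩))).symm
      simp only [ne_eq, Sum.inr.injEq, Prod.mk.injEq, Fin.mk.injEq, not_and]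
      intro _
      have := s'.isLt
      omega
    · -- K33 right / K33 right : no edge
      have hI : GraphI.Adj (Sum.inr (Sum.inr t)) (Sum.inr (Sum.inr t')) := hvw
      rw [GraphI, SimpleGraph.fromRel_adj] at hI
      obtain ⟨-, h⟩ := hI
      rcases h with h | h <;> exact h.elim
    · -- K33 right / ray : no edge
      simp [GraphH, SimpleGraph.sum_adj] at hvw
    · -- ray / K5 : no edge
      simp [GraphH, SimpleGraph.sum_adj] at hvw
    · -- ray / K33 left : no edge
      simp [GraphH, SimpleGraph.sum_adj] at hvw
    · -- ray / K33 right : no edge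
      simp [GraphH, SimpleGraph.sum_adj] at hvw
    · -- ray / ray
      have hR : Ray.Adj m m' := hvw
      rw [Ray, SimpleGraph.fromRel_adj] at hR
      obtain ⟨hne, h⟩ := hR
      refine ⟨Sum.inl ((n : ℤ) + (k : ℤ), m), rfl, Sum.inl ((n : ℤ) + (k : ℤ), m'), rfl, ?_⟩
      refine grid_adj (by simp only [ne_eq, Prod.mk.injEq, not_and]; omega) ?_
      rcases h with h | h
      · exact Or.inl (Or.inr ⟨rfl, h⟩)
      · exact Or.inr (Or.inr ⟨rfl, h⟩)

/-- For every natural number `n`, the graph `G` contains `n` pairwise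
vertex-disjoint `H`-minors. -/
theorem statement1 :
    ∀ n : ℕ, ∃ B : Fin n → (IV ⊕ ℕ) → Set GV, DisjointModels GraphH GraphG B := by
  intro n
  refine ⟨fun k => modelB n k.val, fun k => modelB_isModel n k.val k.isLt, ?_⟩
  intro k l hkl
  exact modelB_cross k.isLt l.isLt (fun h => hkl (Fin.ext h))
end

section
/- For every finite set S of vertices of the graph G, the graph G − S (the induced subgraph on the complement of S) has exactly one infinite connected component. -/
open SimpleGraph

namespace St7

def ReachV (S : Set GV) (a b : GV) : Prop :=
  ∃ (ha : a ∈ Sᶜ) (hb : b ∈ Sᶜ), (GraphG.induce Sᶜ).Reachable ⟨a, ha⟩ ⟨b, hb⟩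

lemma ReachV.symm {S a b} (h : ReachV S a b) : ReachV S b a := by
  obtain ⟨ha, hb, h⟩ := h; exact ⟨hb, ha, h.symm⟩

lemma ReachV.trans {S a b c} (h : ReachV S a b) (h' : ReachV S b c) : ReachV S a c := by
  obtain ⟨ha, hb, h⟩ := h; obtain ⟨hb', hc, h'⟩ := h'
  exact ⟨ha, hc, h.trans (by convert h' using 2)⟩

lemma reachV_refl {S : Set GV} {a : GV} (ha : a ∈ Sᶜ) : ReachV S a a := ⟨ha, ha, by rfl⟩

lemma reachV_of_adj {S : Set GV} {a b : GV} (ha : a ∈ Sᶜ) (hb : b ∈ Sᶜ)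
    (h : GraphG.Adj a b) : ReachV S a b :=
  ⟨ha, hb, Adj.reachable (by simpa using h)⟩
lemma gadj_of_gridRel {p q : ℤ × ℕ} (h : GridRel p q) : GraphG.Adj (Sum.inl p) (Sum.inl q) := by
  refine (SimpleGraph.fromRel_adj _ _ _).2 ⟨?_, Or.inl h⟩
  intro he
  injection he with he
  subst he
  rcases h with ⟨h1, _⟩ | ⟨_, h2⟩ <;> omega

lemma reach_up {S : Set GV} (x : ℤ) (y : ℕ) (k : ℕ)
    (h : ∀ j : ℕ, y ≤ j → j ≤ y + k → Sum.inl (x, j) ∉ S) :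
    ReachV S (Sum.inl (x, y)) (Sum.inl (x, y + k)) := by
  induction k with
  | zero => exact reachV_refl (h y le_rfl (by omega))
  | succ k ih =>
    refine (ih fun j h1 h2 => h j h1 (by omega)).trans ?_
    exact reachV_of_adj (h (y+k) (by omega) (by omega)) (h (y+k+1) (by omega) (by omega))
      (gadj_of_gridRel (Or.inr ⟨rfl, rfl⟩))

lemma reach_right {S : Set GV} (x : ℤ) (y : ℕ) (k : ℕ)
    (h : ∀ j : ℕ, j ≤ k → Sum.inl (x + j, y) ∉ S) :
    ReachV S (Sum.inl (x, y)) (Sum.inl (x + k, y)) := by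
  induction k with
  | zero => simpa using reachV_refl (by simpa using h 0 (by omega))
  | succ k ih =>
    refine (ih fun j h1 => h j (by omega)).trans ?_
    exact reachV_of_adj (h k (by omega)) (h (k+1) le_rfl)
      (gadj_of_gridRel (Or.inl ⟨by push_cast; ring, rfl⟩))

lemma reach_horiz {S : Set GV} (x x' : ℤ) (y : ℕ)
    (h : ∀ z : ℤ, min x x' ≤ z → z ≤ max x x' → Sum.inl (z, y) ∉ S) :
    ReachV S (Sum.inl (x, y)) (Sum.inl (x', y)) := by
  rcases le_total x x' with hle | hle
  · have e : x' = x + ((x' - x).toNat : ℤ) := by omega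
    rw [e]
    exact reach_right x y _ (fun j hj => h (x + j) (by omega) (by omega))
  · have e : x = x' + ((x - x').toNat : ℤ) := by omega
    refine ReachV.symm ?_
    rw [e]
    exact reach_right x' y _ (fun j hj => h (x' + j) (by omega) (by omega))

lemma reach_vert {S : Set GV} (x : ℤ) (y y' : ℕ)
    (h : ∀ j : ℕ, min y y' ≤ j → j ≤ max y y' → Sum.inl (x, j) ∉ S) :
    ReachV S (Sum.inl (x, y)) (Sum.inl (x, y')) := by
  rcases le_total y y' with hle | hle
  · have e : y' = y + (y' - y) := by omega
    rw [e]
    exact reach_up x y _ (fun j h1 h2 => h j (by omega) (by omega))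
  · have e : y = y' + (y - y') := by omega
    refine ReachV.symm ?_
    rw [e]
    exact reach_up x y' _ (fun j h1 h2 => h j (by omega) (by omega))

/-- Any grid vertex outside the `N`-box reaches `(N, N)`. -/
lemma far_reach {S : Set GV} {N : ℕ}
    (hN : ∀ p : ℤ × ℕ, Sum.inl p ∈ S → p.1.natAbs < N ∧ p.2 < N)
    {p : ℤ × ℕ} (hfar : N ≤ p.1.natAbs ∨ N ≤ p.2) :
    ReachV S (Sum.inl p) (Sum.inl ((N : ℤ), N)) := by
  have hrowN : ∀ z : ℤ, Sum.inl (z, N) ∉ S := fun z hz => by have := (hN _ hz).2; omega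
  have hcolN : ∀ j : ℕ, Sum.inl ((N:ℤ), j) ∉ S := fun j hj => by
    have := (hN _ hj).1; simp at this
  rcases hfar with hx | hy
  · -- column p.1 is free
    have hcol : ∀ j : ℕ, Sum.inl (p.1, j) ∉ S := fun j hj => by have := (hN _ hj).1; omega
    have r1 : ReachV S (Sum.inl p) (Sum.inl (p.1, N)) := by
      have := reach_vert (S := S) p.1 p.2 N (fun j _ _ => hcol j)
      simpa using this
    exact r1.trans (reach_horiz p.1 (N:ℤ) N (fun z _ _ => hrowN z))
  · -- row p.2 is free
    have hrow : ∀ z : ℤ, Sum.inl (z, p.2) ∉ S := fun z hz => by have := (hN _ hz).2; omega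
    have r1 : ReachV S (Sum.inl p) (Sum.inl ((N:ℤ), p.2)) := by
      have := reach_horiz (S := S) p.1 (N:ℤ) p.2 (fun z _ _ => hrow z)
      simpa using this
    exact r1.trans (reach_vert (N:ℤ) p.2 N (fun j _ _ => hcolN j))

/-- Walk confinement: if `A` is closed under `GraphG`-adjacency except at `base`,
then a walk starting in `A \ {base}` either stays there or reaches a copy of `base`. -/
lemma confined {S : Set GV} (A : Set GV) (base : GV)
    (hA : ∀ u ∈ A, u ≠ base → ∀ v, GraphG.Adj u v → v ∈ A)
    {u v : ↥Sᶜ} (w : (GraphG.induce Sᶜ).Walk u v) :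
    u.1 ∈ A → u.1 ≠ base →
      ((v.1 ∈ A ∧ v.1 ≠ base) ∨
        ∃ m : ↥Sᶜ, m.1 = base ∧ (GraphG.induce Sᶜ).Reachable u m) := by
  induction w with
  | nil => exact fun hu hub => Or.inl ⟨hu, hub⟩
  | @cons a b c h p ih =>
    intro hu hub
    have hadj : GraphG.Adj a.1 b.1 := by simpa using h
    have hb : b.1 ∈ A := hA a.1 hu hub b.1 hadj
    by_cases hbase : b.1 = base
    · exact Or.inr ⟨b, hbase, h.reachable⟩
    · rcases ih hb hbase with hl | ⟨m, hm, hr⟩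
      · exact Or.inl hl
      · exact Or.inr ⟨m, hm, h.reachable.trans hr⟩

lemma K5_nbhd {a : NegInt} {i : Fin 4} {v : GV}
    (h : GraphG.Adj (Sum.inr (Sum.inl (a, i))) v) : v ∈ K5copy a := by
  rw [GraphG, SimpleGraph.fromRel_adj] at h
  obtain ⟨hne, h | h⟩ := h <;> rcases v with p | (w | w)
  · exact absurd h (by simp [GRel])
  · exact Or.inr ⟨w.2, by rw [GRel] at h; rw [show w = (a, w.2) from Prod.ext h.symm rfl]⟩
  · exact absurd h (by simp [GRel])
  · rw [GRel] at h; exact Or.inl (by simp [h])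
  · exact Or.inr ⟨w.2, by rw [GRel] at h; rw [show w = (a, w.2) from Prod.ext h rfl]⟩
  · exact absurd h (by simp [GRel])

lemma K33_nbhd {b : NonnegInt} {i : Fin 5} {v : GV}
    (h : GraphG.Adj (Sum.inr (Sum.inr (b, i))) v) : v ∈ K33copy b := by
  rw [GraphG, SimpleGraph.fromRel_adj] at h
  obtain ⟨hne, h | h⟩ := h <;> rcases v with p | (w | w)
  · exact absurd h (by simp [GRel])
  · exact absurd h (by simp [GRel])
  · exact Or.inr ⟨w.2, by rw [GRel] at h; rw [show w = (b, w.2) from Prod.ext h.1.symm rfl]⟩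
  · rw [GRel] at h; exact Or.inl (by simp [h.1])
  · exact absurd h (by simp [GRel])
  · exact Or.inr ⟨w.2, by rw [GRel] at h; rw [show w = (b, w.2) from Prod.ext h.1 rfl]⟩

lemma K5copy_finite (a : NegInt) : (K5copy a).Finite := by
  apply Set.Finite.union (Set.finite_singleton _)
  have : {x : GV | ∃ i : Fin 4, x = Sum.inr (Sum.inl (a, i))}
      ⊆ Set.range (fun i : Fin 4 => (Sum.inr (Sum.inl (a, i)) : GV)) := by
    rintro x ⟨i, rfl⟩; exact ⟨i, rfl⟩
  exact (Set.finite_range _).subset this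

lemma K33copy_finite (b : NonnegInt) : (K33copy b).Finite := by
  apply Set.Finite.union (Set.finite_singleton _)
  have : {x : GV | ∃ i : Fin 5, x = Sum.inr (Sum.inr (b, i))}
      ⊆ Set.range (fun i : Fin 5 => (Sum.inr (Sum.inr (b, i)) : GV)) := by
    rintro x ⟨i, rfl⟩; exact ⟨i, rfl⟩
  exact (Set.finite_range _).subset this

def loc : GV → ℤ × ℕ
  | Sum.inl p => p
  | Sum.inr (Sum.inl w) => (w.1.1, 0)
  | Sum.inr (Sum.inr w) => (w.1.1, 0)

def tag : GV → Unit ⊕ (Fin 4 ⊕ Fin 5)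
  | Sum.inl _ => Sum.inl ()
  | Sum.inr (Sum.inl w) => Sum.inr (Sum.inl w.2)
  | Sum.inr (Sum.inr w) => Sum.inr (Sum.inr w.2)

lemma phi_inj : Function.Injective (fun v : GV => (loc v, tag v)) := by
  rintro (p | (⟨a, i⟩ | ⟨b, i⟩)) (q | (⟨a', i'⟩ | ⟨b', i'⟩)) h <;>
    simp only [loc, tag, Prod.mk.injEq] at h
  · rw [h.1]
  · exact absurd h.2 (by simp)
  · exact absurd h.2 (by simp)
  · exact absurd h.2 (by simp)
  · have hi : i = i' := by simpa using h.2
    rw [Subtype.ext h.1.1, hi]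
  · exact absurd h.2 (by simp)
  · exact absurd h.2 (by simp)
  · exact absurd h.2 (by simp)
  · have hi : i = i' := by simpa using h.2
    rw [Subtype.ext h.1.1, hi]

lemma loc_preimage_finite {B : Set (ℤ × ℕ)} (hB : B.Finite) : (loc ⁻¹' B).Finite := by
  have he : loc ⁻¹' B
      = (fun v : GV => (loc v, tag v)) ⁻¹' (B ×ˢ (Set.univ : Set (Unit ⊕ (Fin 4 ⊕ Fin 5)))) := by
    ext v; simp
  rw [he]
  exact Set.Finite.preimage phi_inj.injOn (hB.prod Set.finite_univ)

lemma exists_far {S : Set GV} {N : ℕ}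
    (hN : ∀ p : ℤ × ℕ, Sum.inl p ∈ S → p.1.natAbs < N ∧ p.2 < N)
    (C : (GraphG.induce Sᶜ).ConnectedComponent) (hC : C.supp.Infinite) :
    ∃ (p : ℤ × ℕ) (hp : Sum.inl p ∈ Sᶜ),
      (N ≤ p.1.natAbs ∨ N ≤ p.2) ∧ (⟨Sum.inl p, hp⟩ : ↥Sᶜ) ∈ C.supp := by
  by_contra hfar
  push_neg at hfar
  have hnear : ∀ (p : ℤ × ℕ) (hp : Sum.inl p ∈ Sᶜ),
      (⟨Sum.inl p, hp⟩ : ↥Sᶜ) ∈ C.supp → p.1.natAbs < N ∧ p.2 < N := by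
    intro p hp hm
    by_contra h0
    exact hfar p hp (by omega) hm
  have key : ∀ (v : ↥Sᶜ), v ∈ C.supp → ∀ (A : Set GV) (base : GV), v.1 ∈ A → v.1 ≠ base →
      A.Finite → (∀ u ∈ A, u ≠ base → ∀ x, GraphG.Adj u x → x ∈ A) →
      ∃ m : ↥Sᶜ, m.1 = base ∧ m ∈ C.supp := by
    intro v hv A base hvA hvb hAfin hclosed
    by_contra hbase
    push_neg at hbase
    have hsub : C.supp ⊆ Subtype.val ⁻¹' A := by
      intro u hu
      have hr : (GraphG.induce Sᶜ).Reachable v u := by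
        rw [SimpleGraph.ConnectedComponent.mem_supp_iff] at hv hu
        exact SimpleGraph.ConnectedComponent.eq.1 (hv.trans hu.symm)
      obtain ⟨w⟩ := hr
      rcases confined A base hclosed w hvA hvb with ⟨h1, _⟩ | ⟨m, hm1, hm2⟩
      · exact h1
      · have hmC : m ∈ C.supp := by
          rw [SimpleGraph.ConnectedComponent.mem_supp_iff,
            ← (SimpleGraph.ConnectedComponent.mem_supp_iff _ _).1 hv]
          exact SimpleGraph.ConnectedComponent.eq.2 hm2.symm
        exact absurd hmC (hbase m hm1)
    exact hC ((Set.Finite.preimage Subtype.val_injective.injOn hAfin).subset hsub)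
  have claim1 : ∀ v : ↥Sᶜ, v ∈ C.supp → (loc v.1).1.natAbs < N ∧ (loc v.1).2 < N := by
    intro v hv
    obtain ⟨val, hvS⟩ := v
    rcases val with p | (⟨a, i⟩ | ⟨b, i⟩)
    · exact hnear p hvS hv
    · have hcl : ∀ u ∈ K5copy a, u ≠ Sum.inl ((a.1 : ℤ), (0:ℕ)) →
          ∀ x, GraphG.Adj u x → x ∈ K5copy a := by
        intro u hu hub x hadj
        rcases hu with h0 | ⟨j, rfl⟩
        · exact absurd h0 hub
        · exact K5_nbhd hadj
      obtain ⟨m, hm1, hm2⟩ := key ⟨_, hvS⟩ hv (K5copy a) (Sum.inl (a.1, 0))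
        (Or.inr ⟨i, rfl⟩) (by simp) (K5copy_finite a) hcl
      obtain ⟨mval, hmS⟩ := m
      dsimp at hm1
      subst hm1
      have := hnear (a.1, 0) hmS hm2
      simpa [loc] using this
    · have hcl : ∀ u ∈ K33copy b, u ≠ Sum.inl ((b.1 : ℤ), (0:ℕ)) →
          ∀ x, GraphG.Adj u x → x ∈ K33copy b := by
        intro u hu hub x hadj
        rcases hu with h0 | ⟨j, rfl⟩
        · exact absurd h0 hub
        · exact K33_nbhd hadj
      obtain ⟨m, hm1, hm2⟩ := key ⟨_, hvS⟩ hv (K33copy b) (Sum.inl (b.1, 0))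
        (Or.inr ⟨i, rfl⟩) (by simp) (K33copy_finite b) hcl
      obtain ⟨mval, hmS⟩ := m
      dsimp at hm1
      subst hm1
      have := hnear (b.1, 0) hmS hm2
      simpa [loc] using this
  have hBfin : ({p : ℤ × ℕ | p.1.natAbs < N ∧ p.2 < N}).Finite := by
    apply Set.Finite.subset ((Set.finite_Icc (-(N:ℤ)) (N:ℤ)).prod (Set.finite_Iio N))
    rintro ⟨x, y⟩ ⟨h1, h2⟩
    exact Set.mem_prod.2 ⟨Set.mem_Icc.2 (by omega), h2⟩
  have hsub : C.supp ⊆ Subtype.val ⁻¹' (loc ⁻¹' {p : ℤ × ℕ | p.1.natAbs < N ∧ p.2 < N}) :=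
    fun v hv => claim1 v hv
  exact hC ((Set.Finite.preimage Subtype.val_injective.injOn
    (loc_preimage_finite hBfin)).subset hsub)

def mfun : GV → ℕ
  | Sum.inl p => max p.1.natAbs p.2 + 1
  | _ => 0

end St7

/-- For every finite set `S` of vertices of `G`, the graph `G − S` has
exactly one infinite connected component. -/
theorem statement7 (S : Set GV) (hS : S.Finite) :
    ∃! C : (GraphG.induce Sᶜ).ConnectedComponent, C.supp.Infinite := by
  classical
  obtain ⟨N0, hN0⟩ := (hS.image St7.mfun).bddAbove
  set N := N0 + 1 with hNdef
  have hN : ∀ p : ℤ × ℕ, Sum.inl p ∈ S → p.1.natAbs < N ∧ p.2 < N := by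
    intro p hp
    have h := hN0 (Set.mem_image_of_mem St7.mfun hp)
    simp only [St7.mfun] at h
    have h1 : p.1.natAbs ≤ max p.1.natAbs p.2 := le_max_left _ _
    have h2 : p.2 ≤ max p.1.natAbs p.2 := le_max_right _ _
    omega
  have hfree : ∀ k : ℕ, Sum.inl ((N:ℤ), N + k) ∈ Sᶜ := by
    intro k hk
    have := (hN _ hk).2
    omega
  refine ⟨(GraphG.induce Sᶜ).connectedComponentMk ⟨Sum.inl ((N:ℤ), N), hfree 0⟩, ?_, ?_⟩
  · refine Set.infinite_of_injective_forall_mem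
      (f := fun k : ℕ => (⟨Sum.inl ((N:ℤ), N + k), hfree k⟩ : ↥Sᶜ)) ?_ ?_
    · intro k l hkl
      simp only [Subtype.mk.injEq, Sum.inl.injEq, Prod.mk.injEq] at hkl
      omega
    · intro k
      rw [SimpleGraph.ConnectedComponent.mem_supp_iff]
      apply SimpleGraph.ConnectedComponent.sound
      have hcol : ∀ j : ℕ, N ≤ j → j ≤ N + k → Sum.inl ((N:ℤ), j) ∉ S := by
        intro j h1 h2
        have := hfree (j - N)
        rwa [show N + (j - N) = j by omega] at this
      obtain ⟨ha, hb, hr⟩ := St7.reach_up (S := S) (N:ℤ) N k hcol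
      exact hr.symm
  · intro C hC
    obtain ⟨p, hp, hfar2, hmem⟩ := St7.exists_far hN C hC
    obtain ⟨ha, hb, hr⟩ := St7.far_reach hN (S := S) hfar2
    rw [← (SimpleGraph.ConnectedComponent.mem_supp_iff _ _).1 hmem]
    exact SimpleGraph.ConnectedComponent.sound hr
end

section
/- Let (P_i)_{i ∈ ℕ} be an infinite family of pairwise vertex-disjoint paths in the graph G such that each P_i joins a vertex (a_i, 0) with a_i < 0 to a vertex (b_i, 0) with b_i ≥ 0. Then the subgraph of G induced on the complement of the union of the vertex sets of the paths P_i is rayless, i.e., it contains no ray as a subgraph. -/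
open SimpleGraph

namespace St8

noncomputable section

/-- indicator with values in `ZMod 2` -/
def ind (p : Prop) : ZMod 2 := @ite _ p (Classical.propDecidable p) 1 0

lemma ind_congr {p q : Prop} (h : p ↔ q) : ind p = ind q := by
  rw [propext h]

lemma ind_of_false {p : Prop} (h : ¬ p) : ind p = 0 :=
  @if_neg p (Classical.propDecidable p) h (ZMod 2) 1 0

lemma ind_of_true {p : Prop} (h : p) : ind p = 1 :=
  @if_pos p (Classical.propDecidable p) h (ZMod 2) 1 0

/-- the grid point associated to a vertex of `G` (blob vertices map to their
attachment point). -/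
def gpt : GV → ℤ × ℕ
  | Sum.inl p => p
  | Sum.inr (Sum.inl w) => (w.1.1, 0)
  | Sum.inr (Sum.inr w) => (w.1.1, 0)

/-- the pair `u, v` is (in some order) the horizontal grid edge from `(x,h)` to
`(x+1,h)`. -/
def pat (x : ℤ) (h : ℕ) (u v : GV) : Prop :=
  (u = Sum.inl (x, h) ∧ v = Sum.inl (x + 1, h)) ∨
    (u = Sum.inl (x + 1, h) ∧ v = Sum.inl (x, h))

lemma pat_inl_inl {x : ℤ} {h : ℕ} {p1 q1 : ℤ} {p2 q2 : ℕ} :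
    pat x h (Sum.inl (p1, p2)) (Sum.inl (q1, q2)) ↔
      (p2 = h ∧ q2 = h ∧ ((p1 = x ∧ q1 = x + 1) ∨ (p1 = x + 1 ∧ q1 = x))) := by
  unfold pat
  simp only [Sum.inl.injEq, Prod.mk.injEq]
  tauto

lemma pat_inr_left {x : ℤ} {h : ℕ} {w} {v : GV} : ¬ pat x h (Sum.inr w) v := by
  rintro (⟨e, -⟩ | ⟨e, -⟩) <;> exact Sum.inr_ne_inl e

lemma pat_inr_right {x : ℤ} {h : ℕ} {w} {u : GV} : ¬ pat x h u (Sum.inr w) := by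
  rintro (⟨-, e⟩ | ⟨-, e⟩) <;> exact Sum.inr_ne_inl e

/-- crossing indicator, heights `> y` -/
def crsH (x : ℤ) (y : ℕ) (u v : GV) : ZMod 2 := ind (∃ h : ℕ, y < h ∧ pat x h u v)

/-- crossing indicator, heights `≤ y` -/
def crsL (x : ℤ) (y : ℕ) (u v : GV) : ZMod 2 := ind (∃ h : ℕ, h ≤ y ∧ pat x h u v)

lemma crsH_inl_inl {x : ℤ} {y : ℕ} {p1 q1 : ℤ} {p2 q2 : ℕ} :
    crsH x y (Sum.inl (p1, p2)) (Sum.inl (q1, q2)) =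
      ind (y < p2 ∧ p2 = q2 ∧ ((p1 = x ∧ q1 = x + 1) ∨ (p1 = x + 1 ∧ q1 = x))) := by
  unfold crsH
  refine ind_congr ⟨?_, ?_⟩
  · rintro ⟨h, hy, hp⟩
    rw [pat_inl_inl] at hp
    obtain ⟨rfl, rfl, hd⟩ := hp
    exact ⟨hy, rfl, hd⟩
  · rintro ⟨hy, h2, hd⟩
    exact ⟨p2, hy, pat_inl_inl.mpr ⟨rfl, h2.symm, hd⟩⟩

lemma crsL_inl_inl {x : ℤ} {y : ℕ} {p1 q1 : ℤ} {p2 q2 : ℕ} :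
    crsL x y (Sum.inl (p1, p2)) (Sum.inl (q1, q2)) =
      ind (p2 ≤ y ∧ p2 = q2 ∧ ((p1 = x ∧ q1 = x + 1) ∨ (p1 = x + 1 ∧ q1 = x))) := by
  unfold crsL
  refine ind_congr ⟨?_, ?_⟩
  · rintro ⟨h, hy, hp⟩
    rw [pat_inl_inl] at hp
    obtain ⟨rfl, rfl, hd⟩ := hp
    exact ⟨hy, rfl, hd⟩
  · rintro ⟨hy, h2, hd⟩
    exact ⟨p2, hy, pat_inl_inl.mpr ⟨rfl, h2.symm, hd⟩⟩

lemma crsH_inr_left {x : ℤ} {y : ℕ} {w} {v : GV} : crsH x y (Sum.inr w) v = 0 :=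
  ind_of_false (by rintro ⟨h, -, hp⟩; exact pat_inr_left hp)

lemma crsH_inr_right {x : ℤ} {y : ℕ} {w} {u : GV} : crsH x y u (Sum.inr w) = 0 :=
  ind_of_false (by rintro ⟨h, -, hp⟩; exact pat_inr_right hp)

lemma crsL_inr_left {x : ℤ} {y : ℕ} {w} {v : GV} : crsL x y (Sum.inr w) v = 0 :=
  ind_of_false (by rintro ⟨h, -, hp⟩; exact pat_inr_left hp)

lemma crsL_inr_right {x : ℤ} {y : ℕ} {w} {u : GV} : crsL x y u (Sum.inr w) = 0 :=
  ind_of_false (by rintro ⟨h, -, hp⟩; exact pat_inr_right hp)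

/-- number (mod 2) of crossings of the vertical line `x + 1/2` strictly above
height `y` by a walk. -/
def cntH (x : ℤ) (y : ℕ) : {u v : GV} → GraphG.Walk u v → ZMod 2
  | _, _, SimpleGraph.Walk.nil => 0
  | u, _, SimpleGraph.Walk.cons (v := w) _ p => crsH x y u w + cntH x y p

/-- number (mod 2) of crossings of the vertical line `x + 1/2` at height `≤ y`
by a walk. -/
def cntL (x : ℤ) (y : ℕ) : {u v : GV} → GraphG.Walk u v → ZMod 2
  | _, _, SimpleGraph.Walk.nil => 0
  | u, _, SimpleGraph.Walk.cons (v := w) _ p => crsL x y u w + cntL x y p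

lemma cntH_nil {x : ℤ} {y : ℕ} {u : GV} :
    cntH x y (SimpleGraph.Walk.nil : GraphG.Walk u u) = 0 := rfl

lemma cntH_cons {x : ℤ} {y : ℕ} {u v w : GV} (h : GraphG.Adj u v)
    (p : GraphG.Walk v w) :
    cntH x y (SimpleGraph.Walk.cons h p) = crsH x y u v + cntH x y p := rfl

lemma cntL_nil {x : ℤ} {y : ℕ} {u : GV} :
    cntL x y (SimpleGraph.Walk.nil : GraphG.Walk u u) = 0 := rfl

lemma cntL_cons {x : ℤ} {y : ℕ} {u v w : GV} (h : GraphG.Adj u v)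
    (p : GraphG.Walk v w) :
    cntL x y (SimpleGraph.Walk.cons h p) = crsL x y u v + cntL x y p := rfl

/-- membership indicator of the set `S = {(x+1, h) : h > y}` -/
def χ (x : ℤ) (y : ℕ) (u : GV) : ZMod 2 := ind (∃ h : ℕ, y < h ∧ u = Sum.inl (x + 1, h))

/-- side indicator: `1` iff the grid point of `u` is in column `≤ x` -/
def τ (x : ℤ) (u : GV) : ZMod 2 := ind ((gpt u).1 ≤ x)

lemma chi_inl {x : ℤ} {y : ℕ} {c : ℤ} {d : ℕ} :
    χ x y (Sum.inl (c, d)) = ind (c = x + 1 ∧ y < d) := by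
  unfold χ
  refine ind_congr ⟨?_, ?_⟩
  · rintro ⟨h, hy, hp⟩
    simp only [Sum.inl.injEq, Prod.mk.injEq] at hp
    exact ⟨hp.1, hp.2 ▸ hy⟩
  · rintro ⟨rfl, hy⟩
    exact ⟨d, hy, rfl⟩

lemma chi_inr {x : ℤ} {y : ℕ} {w} : χ x y (Sum.inr w) = 0 :=
  ind_of_false (by rintro ⟨h, -, hp⟩; exact Sum.inr_ne_inl hp)

lemma chi_bot {x : ℤ} {y : ℕ} {c : ℤ} : χ x y (Sum.inl (c, 0)) = 0 := by
  rw [chi_inl]; exact ind_of_false (by rintro ⟨-, hy⟩; omega)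

lemma tau_inl {x : ℤ} {c : ℤ} {d : ℕ} : τ x (Sum.inl (c, d)) = ind (c ≤ x) := rfl

/-- classification of the edges of `G` -/
lemma grel_cases {u v : GV} (h : GRel u v) :
    (∃ p1 : ℤ, ∃ p2 : ℕ, u = Sum.inl (p1, p2) ∧ v = Sum.inl (p1 + 1, p2)) ∨
    (∃ p1 : ℤ, ∃ p2 : ℕ, u = Sum.inl (p1, p2) ∧ v = Sum.inl (p1, p2 + 1)) ∨
    (gpt u = gpt v ∧ (gpt u).2 = 0 ∧ (u.isRight ∨ v.isRight)) := by
  rcases u with ⟨p1, p2⟩ | w <;> rcases v with ⟨q1, q2⟩ | w'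
  · rcases h with ⟨h1, h2⟩ | ⟨h1, h2⟩
    · left
      refine ⟨p1, p2, rfl, ?_⟩
      simp only [Sum.inl.injEq, Prod.mk.injEq]
      exact ⟨by simpa using h1, by simpa using h2⟩
    · right; left
      refine ⟨p1, p2, rfl, ?_⟩
      simp only [Sum.inl.injEq, Prod.mk.injEq]
      exact ⟨by simpa using h1, by simpa using h2⟩
  · right; right
    rcases w' with w' | w'
    · have hp : (p1, p2) = ((w'.1.1 : ℤ), (0 : ℕ)) := h
      refine ⟨?_, ?_, Or.inr rfl⟩
      · simpa [gpt] using hp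
      · simpa [gpt] using congrArg Prod.snd hp
    · have hp : (p1, p2) = ((w'.1.1 : ℤ), (0 : ℕ)) := h.1
      refine ⟨?_, ?_, Or.inr rfl⟩
      · simpa [gpt] using hp
      · simpa [gpt] using congrArg Prod.snd hp
  · rcases w with w | w <;> exact h.elim
  · right; right
    rcases w with w | w <;> rcases w' with w' | w'
    · have hp : w.1 = w'.1 := h
      exact ⟨by simp [gpt, hp], rfl, Or.inl rfl⟩
    · exact h.elim
    · exact h.elim
    · have hp : w.1 = w'.1 := h.1
      exact ⟨by simp [gpt, hp], rfl, Or.inl rfl⟩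

lemma adj_cases {u v : GV} (h : GraphG.Adj u v) :
    (∃ p1 : ℤ, ∃ p2 : ℕ, (u = Sum.inl (p1, p2) ∧ v = Sum.inl (p1 + 1, p2)) ∨
        (u = Sum.inl (p1 + 1, p2) ∧ v = Sum.inl (p1, p2))) ∨
    (∃ p1 : ℤ, ∃ p2 : ℕ, (u = Sum.inl (p1, p2) ∧ v = Sum.inl (p1, p2 + 1)) ∨
        (u = Sum.inl (p1, p2 + 1) ∧ v = Sum.inl (p1, p2))) ∨
    (gpt u = gpt v ∧ (gpt u).2 = 0 ∧ (u.isRight ∨ v.isRight)) := by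
  rw [GraphG, SimpleGraph.fromRel_adj] at h
  obtain ⟨-, h | h⟩ := h
  · rcases grel_cases h with ⟨p1, p2, h1, h2⟩ | ⟨p1, p2, h1, h2⟩ | h3
    · exact Or.inl ⟨p1, p2, Or.inl ⟨h1, h2⟩⟩
    · exact Or.inr (Or.inl ⟨p1, p2, Or.inl ⟨h1, h2⟩⟩)
    · exact Or.inr (Or.inr h3)
  · rcases grel_cases h with ⟨p1, p2, h1, h2⟩ | ⟨p1, p2, h1, h2⟩ | h3
    · exact Or.inl ⟨p1, p2, Or.inr ⟨h2, h1⟩⟩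
    · exact Or.inr (Or.inl ⟨p1, p2, Or.inr ⟨h2, h1⟩⟩)
    · exact Or.inr (Or.inr ⟨h3.1.symm, h3.1 ▸ h3.2.1, h3.2.2.symm⟩)

/-- per-edge identity for the "total crossing" count -/
lemma edgeT {u v : GV} (x : ℤ) (y : ℕ) (h : GraphG.Adj u v) :
    crsH x y u v + crsL x y u v = τ x u + τ x v := by
  rcases adj_cases h with ⟨p1, p2, ⟨rfl, rfl⟩ | ⟨rfl, rfl⟩⟩ |
    ⟨p1, p2, ⟨rfl, rfl⟩ | ⟨rfl, rfl⟩⟩ | ⟨h1, h2, h3⟩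
  · rw [crsH_inl_inl, crsL_inl_inl, tau_inl, tau_inl]
    unfold ind
    split_ifs <;> first | rfl | decide | omega
  · rw [crsH_inl_inl, crsL_inl_inl, tau_inl, tau_inl]
    unfold ind
    split_ifs <;> first | rfl | decide | omega
  · rw [crsH_inl_inl, crsL_inl_inl, tau_inl, tau_inl]
    unfold ind
    split_ifs <;> first | rfl | decide | omega
  · rw [crsH_inl_inl, crsL_inl_inl, tau_inl, tau_inl]
    unfold ind
    split_ifs <;> first | rfl | decide | omega
  · have hcrs : crsH x y u v = 0 ∧ crsL x y u v = 0 := by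
      rcases h3 with h3 | h3
      · rcases u with p | w
        · exact absurd h3 (by simp)
        · exact ⟨crsH_inr_left, crsL_inr_left⟩
      · rcases v with p | w
        · exact absurd h3 (by simp)
        · exact ⟨crsH_inr_right, crsL_inr_right⟩
    rw [hcrs.1, hcrs.2]
    unfold τ
    rw [h1]
    generalize ind ((gpt v).1 ≤ x) = t
    revert t; decide

/-- per-edge identity for the horizontal-shift invariance -/
lemma edgeH {u v : GV} (x : ℤ) (y : ℕ) (h : GraphG.Adj u v)
    (hu : u ≠ Sum.inl (x + 1, y)) (hv : v ≠ Sum.inl (x + 1, y)) :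
    crsH x y u v + crsH (x + 1) y u v = χ x y u + χ x y v := by
  rcases adj_cases h with ⟨p1, p2, ⟨rfl, rfl⟩ | ⟨rfl, rfl⟩⟩ |
    ⟨p1, p2, ⟨rfl, rfl⟩ | ⟨rfl, rfl⟩⟩ | ⟨h1, h2, h3⟩
  · rw [crsH_inl_inl, crsH_inl_inl, chi_inl, chi_inl]
    unfold ind
    split_ifs <;> first | rfl | decide | omega
  · rw [crsH_inl_inl, crsH_inl_inl, chi_inl, chi_inl]
    unfold ind
    split_ifs <;> first | rfl | decide | omega
  · have hu' : ¬(p1 = x + 1 ∧ p2 = y) := by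
      rintro ⟨rfl, rfl⟩; exact hu rfl
    have hv' : ¬(p1 = x + 1 ∧ p2 + 1 = y) := by
      rintro ⟨rfl, h'⟩; exact hv (by rw [← h'])
    rw [crsH_inl_inl, crsH_inl_inl, chi_inl, chi_inl]
    unfold ind
    split_ifs <;> first | rfl | decide | omega
  · have hu' : ¬(p1 = x + 1 ∧ p2 + 1 = y) := by
      rintro ⟨rfl, h'⟩; exact hu (by rw [← h'])
    have hv' : ¬(p1 = x + 1 ∧ p2 = y) := by
      rintro ⟨rfl, rfl⟩; exact hv rfl
    rw [crsH_inl_inl, crsH_inl_inl, chi_inl, chi_inl]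
    unfold ind
    split_ifs <;> first | rfl | decide | omega
  · have hcrs : crsH x y u v = 0 ∧ crsH (x + 1) y u v = 0 := by
      rcases h3 with h3 | h3
      · rcases u with p | w
        · exact absurd h3 (by simp)
        · exact ⟨crsH_inr_left, crsH_inr_left⟩
      · rcases v with p | w
        · exact absurd h3 (by simp)
        · exact ⟨crsH_inr_right, crsH_inr_right⟩
    have hχ : χ x y u = 0 ∧ χ x y v = 0 := by
      constructor
      · rcases u with ⟨c, d⟩ | w
        · have : d = 0 := by simpa [gpt] using h2
          subst this; exact chi_bot
        · exact chi_inr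
      · rcases v with ⟨c, d⟩ | w
        · have : d = 0 := by
            have := h2; rw [h1] at this; simpa [gpt] using this
          subst this; exact chi_bot
        · exact chi_inr
    rw [hcrs.1, hcrs.2, hχ.1, hχ.2]

/-- per-edge identity for the vertical-shift invariance -/
lemma edgeV {u v : GV} (x : ℤ) (y : ℕ) (h : GraphG.Adj u v)
    (hu : u ≠ Sum.inl (x, y + 1)) (hv : v ≠ Sum.inl (x, y + 1)) :
    crsH x y u v = crsH x (y + 1) u v := by
  rcases adj_cases h with ⟨p1, p2, ⟨rfl, rfl⟩ | ⟨rfl, rfl⟩⟩ |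
    ⟨p1, p2, ⟨rfl, rfl⟩ | ⟨rfl, rfl⟩⟩ | ⟨h1, h2, h3⟩
  · have hu' : ¬(p1 = x ∧ p2 = y + 1) := by
      rintro ⟨rfl, rfl⟩; exact hu rfl
    have hv' : ¬(p1 + 1 = x ∧ p2 = y + 1) := by
      rintro ⟨h', rfl⟩; exact hv (by rw [← h'])
    rw [crsH_inl_inl, crsH_inl_inl]
    unfold ind
    split_ifs <;> first | rfl | decide | omega
  · have hu' : ¬(p1 + 1 = x ∧ p2 = y + 1) := by
      rintro ⟨h', rfl⟩; exact hu (by rw [← h'])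
    have hv' : ¬(p1 = x ∧ p2 = y + 1) := by
      rintro ⟨rfl, rfl⟩; exact hv rfl
    rw [crsH_inl_inl, crsH_inl_inl]
    unfold ind
    split_ifs <;> first | rfl | decide | omega
  · rw [crsH_inl_inl, crsH_inl_inl]
    unfold ind
    split_ifs <;> first | rfl | decide | omega
  · rw [crsH_inl_inl, crsH_inl_inl]
    unfold ind
    split_ifs <;> first | rfl | decide | omega
  · rcases h3 with h3 | h3
    · rcases u with p | w
      · exact absurd h3 (by simp)
      · rw [crsH_inr_left, crsH_inr_left]
    · rcases v with p | w
      · exact absurd h3 (by simp)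
      · rw [crsH_inr_right, crsH_inr_right]

lemma z2 : ∀ a b : ZMod 2, a + b = 0 → a = b := by decide

lemma z2' : ∀ a b c : ZMod 2, (a + b) + (b + c) = a + c := by decide

/-- total crossing parity identity along a walk -/
lemma cnt_T (x : ℤ) (y : ℕ) : ∀ {u v : GV} (W : GraphG.Walk u v),
    cntH x y W + cntL x y W = τ x u + τ x v := by
  intro u v W
  induction W with
  | nil =>
    rw [cntH_nil, cntL_nil, add_zero]
    exact (CharTwo.add_self_eq_zero _).symm
  | cons h p ih =>
    rw [cntH_cons, cntL_cons]
    have e1 := edgeT x y h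
    rw [show ∀ A B C D : ZMod 2, (A + B) + (C + D) = (A + C) + (B + D) from by
      intros; ring]
    rw [e1, ih]
    exact z2' _ _ _

/-- horizontal-shift parity identity along a walk avoiding `(x+1,y)` -/
lemma cnt_H (x : ℤ) (y : ℕ) : ∀ {u v : GV} (W : GraphG.Walk u v),
    Sum.inl (x + 1, y) ∉ W.support →
    cntH x y W + cntH (x + 1) y W = χ x y u + χ x y v := by
  intro u v W
  induction W with
  | nil =>
    intro _
    rw [cntH_nil, cntH_nil, add_zero]
    exact (CharTwo.add_self_eq_zero _).symm
  | cons h p ih =>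
    intro hs
    rw [SimpleGraph.Walk.support_cons, List.mem_cons] at hs
    push_neg at hs
    have e1 := edgeH x y h hs.1.symm (fun e => (hs.2 (e ▸ p.start_mem_support)).elim)
    rw [cntH_cons, cntH_cons]
    rw [show ∀ A B C D : ZMod 2, (A + B) + (C + D) = (A + C) + (B + D) from by
      intros; ring]
    rw [e1, ih hs.2]
    exact z2' _ _ _

/-- vertical-shift parity identity along a walk avoiding `(x,y+1)` -/
lemma cnt_V (x : ℤ) (y : ℕ) : ∀ {u v : GV} (W : GraphG.Walk u v),
    Sum.inl (x, y + 1) ∉ W.support →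
    cntH x y W = cntH x (y + 1) W := by
  intro u v W
  induction W with
  | nil => intro _; rfl
  | cons h p ih =>
    intro hs
    rw [SimpleGraph.Walk.support_cons, List.mem_cons] at hs
    push_neg at hs
    rw [cntH_cons, cntH_cons,
      edgeV x y h hs.1.symm (fun e => (hs.2 (e ▸ p.start_mem_support)).elim),
      ih hs.2]

/-- the high count vanishes if the walk stays in a box avoiding the line and level -/
lemma cnt_H_zero (x : ℤ) (y : ℕ) (M : ℕ) : ∀ {u v : GV} (W : GraphG.Walk u v),
    (∀ p1 : ℤ, ∀ p2 : ℕ, Sum.inl (p1, p2) ∈ W.support → p1.natAbs ≤ M ∧ p2 ≤ M) →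
    ¬(x.natAbs ≤ M ∧ y ≤ M) → cntH x y W = 0 := by
  intro u v W
  induction W with
  | nil => intro _ _; rfl
  | cons h p ih =>
    intro hs hx
    have hmem : ∀ q : GV, q ∈ p.support → q ∈ (SimpleGraph.Walk.cons h p).support := by
      intro q hq
      rw [SimpleGraph.Walk.support_cons, List.mem_cons]
      exact Or.inr hq
    rw [cntH_cons]
    have h2 : cntH x y p = 0 :=
      ih (fun p1 p2 hp => hs p1 p2 (hmem _ hp)) hx
    rw [h2, add_zero]
    unfold crsH
    refine ind_of_false ?_
    rintro ⟨h', hy, (⟨e1, e2⟩ | ⟨e1, e2⟩)⟩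
    · have m1 := hs x h' (by rw [← e1]; exact SimpleGraph.Walk.start_mem_support _)
      have m2 := hs (x + 1) h' (by rw [← e2]; exact hmem _ p.start_mem_support)
      omega
    · have m1 := hs (x + 1) h' (by rw [← e1]; exact SimpleGraph.Walk.start_mem_support _)
      have m2 := hs x h' (by rw [← e2]; exact hmem _ p.start_mem_support)
      omega

/-- the low count vanishes if the walk avoids the column `x` up to height `y` -/
lemma cnt_L_zero (x : ℤ) (y : ℕ) : ∀ {u v : GV} (W : GraphG.Walk u v),
    (∀ h : ℕ, h ≤ y → Sum.inl (x, h) ∉ W.support) → cntL x y W = 0 := by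
  intro u v W
  induction W with
  | nil => intro _; rfl
  | cons h p ih =>
    intro hs
    have hmem : ∀ q : GV, q ∈ p.support → q ∈ (SimpleGraph.Walk.cons h p).support := by
      intro q hq
      rw [SimpleGraph.Walk.support_cons, List.mem_cons]
      exact Or.inr hq
    rw [cntL_cons]
    have h2 : cntL x y p = 0 := ih (fun h' hh hp => hs h' hh (hmem _ hp))
    rw [h2, add_zero]
    unfold crsL
    refine ind_of_false ?_
    rintro ⟨h', hy, (⟨e1, e2⟩ | ⟨e1, e2⟩)⟩
    · exact hs h' hy (by rw [← e1]; exact SimpleGraph.Walk.start_mem_support _)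
    · exact hs h' hy (by rw [← e2]; exact hmem _ p.start_mem_support)

/-- invariance of the crossing parity along an edge of `G` avoiding the walk,
for walks with both endpoints on the bottom row -/
lemma ray_step {s t : ℤ} (W : GraphG.Walk (Sum.inl ((s : ℤ), (0 : ℕ))) (Sum.inl (t, 0)))
    {u v : GV} (hadj : GraphG.Adj u v) (hu : u ∉ W.support) (hv : v ∉ W.support) :
    cntH (gpt u).1 (gpt u).2 W = cntH (gpt v).1 (gpt v).2 W := by
  rcases adj_cases hadj with ⟨p1, p2, ⟨rfl, rfl⟩ | ⟨rfl, rfl⟩⟩ |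
    ⟨p1, p2, ⟨rfl, rfl⟩ | ⟨rfl, rfl⟩⟩ | ⟨h1, h2, h3⟩
  · have key := cnt_H p1 p2 W (fun hm => hv (by exact hm))
    rw [chi_bot, chi_bot, add_zero] at key
    have := z2 _ _ key
    simpa [gpt] using this
  · have key := cnt_H p1 p2 W (fun hm => hu (by exact hm))
    rw [chi_bot, chi_bot, add_zero] at key
    have := z2 _ _ key
    simpa [gpt] using this.symm
  · have key := cnt_V p1 p2 W (fun hm => hv (by exact hm))
    simpa [gpt] using key
  · have key := cnt_V p1 p2 W (fun hm => hu (by exact hm))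
    simpa [gpt] using key.symm
  · rw [h1]

/-- a bound on the coordinates of the grid vertices in a list -/
lemma bound_of (l : List GV) :
    ∃ M : ℕ, ∀ p1 : ℤ, ∀ p2 : ℕ, Sum.inl (p1, p2) ∈ l → p1.natAbs ≤ M ∧ p2 ≤ M := by
  induction l with
  | nil => exact ⟨0, by simp⟩
  | cons w l ih =>
    obtain ⟨M, hM⟩ := ih
    rcases w with ⟨c, d⟩ | w
    · refine ⟨max (max c.natAbs d) M, ?_⟩
      intro p1 p2 hmem
      rcases List.mem_cons.mp hmem with h | h
      · simp only [Sum.inl.injEq, Prod.mk.injEq] at h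
        omega
      · have := hM p1 p2 h
        omega
    · refine ⟨M, ?_⟩
      intro p1 p2 hmem
      rcases List.mem_cons.mp hmem with h | h
      · exact (Sum.inl_ne_inr h).elim
      · exact hM p1 p2 h

/-- an injective encoding of `GV` by grid point and a tag -/
def code : GV → (ℤ × ℕ) × ℕ
  | Sum.inl p => ((p, 0) : (ℤ × ℕ) × ℕ)
  | Sum.inr (Sum.inl w) => (((w.1.1, 0), 1 + (w.2 : ℕ)))
  | Sum.inr (Sum.inr w) => (((w.1.1, 0), 5 + (w.2 : ℕ)))

lemma code_inj : Function.Injective code := by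
  rintro (p | (⟨a, i⟩ | ⟨b, i⟩)) (q | (⟨a', i'⟩ | ⟨b', i'⟩)) h <;>
    simp only [code, Prod.mk.injEq] at h
  · rw [h.1]
  · have h2 := h.2; omega
  · have h2 := h.2; omega
  · have h2 := h.2; omega
  · obtain ⟨⟨h1, -⟩, h2⟩ := h
    have hi : i = i' := Fin.ext (by omega)
    have ha : a = a' := Subtype.ext h1
    rw [hi, ha]
  · have h2 := h.2; have hi := i.isLt; have hi' := i'.isLt; omega
  · have h2 := h.2; omega
  · have h2 := h.2; have hi := i.isLt; have hi' := i'.isLt; omega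
  · obtain ⟨⟨h1, -⟩, h2⟩ := h
    have hi : i = i' := Fin.ext (by omega)
    have hb : b = b' := Subtype.ext h1
    rw [hi, hb]

lemma gpt_code (u : GV) : (code u).1 = gpt u := by
  rcases u with p | (w | w) <;> rfl

lemma code_tag_le (u : GV) : (code u).2 ≤ 9 := by
  rcases u with p | (⟨a, i⟩ | ⟨b, i⟩) <;> simp [code] <;> omega

end

end St8

/-- If `(P i)
` is an infinite family of pairwise vertex-disjoint paths in
`G`, each joining a vertex `(a i, 0)` with `a i < 0` to a vertex `(b i, 0)` with
`b i ≥ 0`, then the subgraph of `G` induced on the complement of the union of the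
vertex sets of the paths is rayless: it contains no ray as a subgraph. -/
theorem statement8 (a b : ℕ → ℤ) (ha : ∀ i, a i < 0) (hb : ∀ i, 0 ≤ b i)
    (P : ∀ i : ℕ, GraphG.Walk (Sum.inl (a i, 0)) (Sum.inl (b i, 0)))
    (hpath : ∀ i, (P i).IsPath)
    (hdisj : ∀ ⦃i j : ℕ⦄, i ≠ j →
      Disjoint {v | v ∈ (P i).support} {v | v ∈ (P j).support}) :
    ¬ ∃ f : ℕ → GV,
      (∀ n, f n ∈ (⋃ i, {v | v ∈ (P i).support})ᶜ) ∧
      Function.Injective f ∧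
      ∀ n, GraphG.Adj (f n) (f (n + 1)) := by
  rintro ⟨f, hf, hinj, hadj⟩
  classical
  have hfs : ∀ n i, f n ∉ (P i).support := by
    intro n i
    have h := hf n
    simp only [Set.mem_compl_iff, Set.mem_iUnion, Set.mem_setOf_eq, not_exists] at h
    exact h i
  -- the crossing parity is constant along the ray
  have hconst : ∀ i n, St8.cntH (St8.gpt (f n)).1 (St8.gpt (f n)).2 (P i)
      = St8.cntH (St8.gpt (f 0)).1 (St8.gpt (f 0)).2 (P i) := by
    intro i n
    induction n with
    | zero => rfl
    | succ n ih =>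
      rw [← ih]
      exact (St8.ray_step (P i) (hadj n) (hfs n i) (hfs (n + 1) i)).symm
  -- since the ray escapes every box, every crossing parity is zero
  have hzero : ∀ i, St8.cntH (St8.gpt (f 0)).1 (St8.gpt (f 0)).2 (P i) = 0 := by
    intro i
    obtain ⟨M, hM⟩ := St8.bound_of (P i).support
    have hesc : ∃ n, ¬((St8.gpt (f n)).1.natAbs ≤ M ∧ (St8.gpt (f n)).2 ≤ M) := by
      by_contra hcon
      push_neg at hcon
      have hfin : ((Set.Icc (-(M : ℤ)) (M : ℤ) ×ˢ Set.Iic M) ×ˢ Set.Iic 9 :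
          Set ((ℤ × ℕ) × ℕ)).Finite :=
        (((Set.finite_Icc _ _).prod (Set.finite_Iic _)).prod (Set.finite_Iic _))
      have hsub : Set.range (St8.code ∘ f) ⊆
          ((Set.Icc (-(M : ℤ)) (M : ℤ) ×ˢ Set.Iic M) ×ˢ Set.Iic 9 :
            Set ((ℤ × ℕ) × ℕ)) := by
        rintro z ⟨n, rfl⟩
        have h1 := hcon n
        have h2 := St8.code_tag_le (f n)
        have h3 := St8.gpt_code (f n)
        refine ⟨⟨?_, ?_⟩, h2⟩
        · simp only [Function.comp_apply, h3, Set.mem_Icc]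
          omega
        · simp only [Function.comp_apply, h3, Set.mem_Iic]
          omega
      exact Set.infinite_range_of_injective (St8.code_inj.comp hinj)
        (hfin.subset hsub)
    obtain ⟨n, hn⟩ := hesc
    rw [← hconst i n]
    exact St8.cnt_H_zero _ _ M (P i) hM hn
  -- disjointness: only one path can use each vertex
  have hsing : ∀ v : GV, {i : ℕ | v ∈ (P i).support}.Subsingleton := by
    intro v i hi j hj
    by_contra hne
    exact Set.disjoint_left.mp (hdisj hne) hi hj
  -- the three finite "bad" sets of indices
  have h1fin : {i : ℕ | ∃ h : ℕ, h ≤ (St8.gpt (f 0)).2 ∧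
      Sum.inl (((St8.gpt (f 0)).1, h) : ℤ × ℕ) ∈ (P i).support}.Finite := by
    refine Set.Finite.subset (Set.Finite.biUnion (Set.finite_Iic (St8.gpt (f 0)).2)
      (fun h _ => (hsing (Sum.inl ((St8.gpt (f 0)).1, h))).finite)) ?_
    rintro i ⟨h, hh, hmem⟩
    exact Set.mem_biUnion hh hmem
  have h2fin : {i : ℕ | a i ∈ Set.Ioo (St8.gpt (f 0)).1 (0 : ℤ)}.Finite := by
    refine Set.Finite.subset (Set.Finite.biUnion (Set.finite_Ioo (St8.gpt (f 0)).1 0)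
      (fun z _ => (hsing (Sum.inl ((z, 0) : ℤ × ℕ))).finite)) ?_
    intro i hi
    exact Set.mem_biUnion hi ((P i).start_mem_support)
  have h3fin : {i : ℕ | b i ∈ Set.Icc (0 : ℤ) (St8.gpt (f 0)).1}.Finite := by
    refine Set.Finite.subset (Set.Finite.biUnion (Set.finite_Icc (0 : ℤ) (St8.gpt (f 0)).1)
      (fun z _ => (hsing (Sum.inl ((z, 0) : ℤ × ℕ))).finite)) ?_
    intro i hi
    exact Set.mem_biUnion hi ((P i).end_mem_support)
  obtain ⟨i, hi⟩ := (((h1fin.union h2fin).union h3fin).infinite_compl).nonempty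
  rw [Set.mem_compl_iff, Set.mem_union, Set.mem_union] at hi
  push_neg at hi
  obtain ⟨⟨hi1, hi2⟩, hi3⟩ := hi
  -- compute the crossing parity of `P i` : it is 1
  have key := St8.cnt_T (St8.gpt (f 0)).1 (St8.gpt (f 0)).2 (P i)
  have hL : St8.cntL (St8.gpt (f 0)).1 (St8.gpt (f 0)).2 (P i) = 0 :=
    St8.cnt_L_zero _ _ (P i) (fun h hh hmem => hi1 ⟨h, hh, hmem⟩)
  have hax : a i ≤ (St8.gpt (f 0)).1 := by
    by_contra hlt
    push_neg at hlt
    exact hi2 ⟨hlt, ha i⟩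
  have hbx : ¬ (b i ≤ (St8.gpt (f 0)).1) := fun hle => hi3 ⟨hb i, hle⟩
  rw [hzero i, hL, St8.tau_inl, St8.tau_inl, St8.ind_of_true hax,
    St8.ind_of_false hbx] at key
  exact absurd key (by decide)
end

section
/- Let (P_i)_{i ∈ ℕ} be an infinite family of pairwise vertex-disjoint paths in the graph G such that each P_i joins a vertex (a_i, 0) with a_i < 0 to a vertex (b_i, 0) with b_i ≥ 0, and for each i let C_i be the unique infinite component of G − V(P_i). Then the intersection ⋂_{i ∈ ℕ} C_i of the vertex sets of these components is empty. -/
open SimpleGraph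

-- general auxiliary lemmas
namespace S9Aux

lemma le_foldr_max (l : List ℕ) (a : ℕ) (h : a ∈ l) : a ≤ l.foldr max 0 := by
  induction l with
  | nil => simp at h
  | cons x xs ih =>
    rcases List.mem_cons.mp h with h | h
    · simp [List.foldr, h]
    · exact le_trans (ih h) (by simp [List.foldr])

lemma countP_or_disjoint {α : Type*} (l : List α) (p q : α → Bool)
    (h : ∀ x ∈ l, ¬(p x = true ∧ q x = true)) :
    l.countP (fun x => p x || q x) = l.countP p + l.countP q := by
  induction l with
  | nil => simp
  | cons x xs ih =>
    have hx := h x (by simp)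
    have ih' := ih (fun y hy => h y (by simp [hy]))
    by_cases hp : p x = true <;> by_cases hq : q x = true
    · exact absurd ⟨hp, hq⟩ hx
    all_goals simp [List.countP_cons, hp, hq, ih'] <;> omega

/-- crossing-parity lemma -/
lemma crossings_parity (Bf : GV → Bool) :
    ∀ {u v : GV} (W : GraphG.Walk u v),
    ((W.darts.countP (fun d => Bf d.fst != Bf d.snd))
      + (if Bf u then 1 else 0) + (if Bf v then 1 else 0)) % 2 = 0 := by
  intro u v W
  induction W with
  | nil =>
    rename_i w
    cases h : Bf w <;> simp [h]
  | @cons u u' v hadj q ih =>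
    simp only [SimpleGraph.Walk.darts_cons, List.countP_cons]
    cases hu : Bf u <;> cases hu' : Bf u' <;>
      cases hv : Bf v <;>
      simp only [hu, hu', hv] at ih ⊢ <;> simp_all <;> omega

end S9Aux
namespace S9Aux

/-- The adjacency of GraphG unfolded. -/
lemma adjG {u v : GV} (h : GraphG.Adj u v) : u ≠ v ∧ (GRel u v ∨ GRel v u) := h

/-- An "interior" set whose only exit is through `base`. -/
def ExitOnly (I : Set GV) (base : GV) : Prop :=
  ∀ ⦃x y : GV⦄, x ∈ I → GraphG.Adj x y → y ∉ I → y = base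

/-- any walk from inside `I` to outside passes through `base`. -/
lemma base_mem_of_exit {I : Set GV} {base : GV} (hI : ExitOnly I base) :
    ∀ {x v : GV} (W : GraphG.Walk x v), x ∈ I → v ∉ I → base ∈ W.support := by
  intro x v W
  induction W with
  | nil => intro hx hv; exact absurd hx hv
  | @cons x x' v hadj q ih =>
    intro hx hv
    by_cases hx' : x' ∈ I
    · exact List.mem_cons_of_mem _ (ih hx' hv)
    · have : x' = base := hI hx hadj hx'
      subst this
      exact List.mem_cons_of_mem _ q.start_mem_support

/-- a path between two vertices outside `I` avoids `I`. -/
lemma path_avoids_interior {I : Set GV} {base : GV} (hI : ExitOnly I base) :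
    ∀ {u v : GV} (p : GraphG.Walk u v), p.IsPath → u ∉ I → v ∉ I →
      ∀ w ∈ p.support, w ∉ I := by
  intro u v p
  induction p with
  | nil =>
    intro _ hu _ w hw
    simp at hw; subst hw; exact hu
  | @cons u x v hadj q ih =>
    intro hp hu hv w hw
    rcases List.mem_cons.mp hw with rfl | hw
    · exact hu
    by_cases hx : x ∈ I
    · -- then q is a walk from inside to outside, so base ∈ q.support
      have hbase : base ∈ q.support := base_mem_of_exit hI q hx hv
      -- but u = base since u ∉ I adjacent to x ∈ I... need Adj x u
      have : u = base := hI hx hadj.symm hu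
      subst this
      exact absurd hbase ((SimpleGraph.Walk.cons_isPath_iff _ _).mp hp).2
    · exact ih ((SimpleGraph.Walk.cons_isPath_iff _ _).mp hp).1 hx hv w hw

def IK5 (c : NegInt) : Set GV := {v | ∃ j : Fin 4, v = Sum.inr (Sum.inl (c, j))}
def IK33 (c : NonnegInt) : Set GV := {v | ∃ j : Fin 5, v = Sum.inr (Sum.inr (c, j))}

lemma exitOnly_IK5 (c : NegInt) : ExitOnly (IK5 c) (Sum.inl (c.1, 0)) := by
  rintro x y ⟨j, rfl⟩ hadj hy
  rcases adjG hadj with ⟨hne, h | h⟩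
  · cases y with
    | inl p => exact absurd h (by simp [GRel])
    | inr w =>
      cases w with
      | inl w' =>
        exfalso; apply hy
        exact ⟨w'.2, by simp [GRel] at h; simp [Prod.ext_iff, ← h]⟩
      | inr w' => exact absurd h (by simp [GRel])
  · cases y with
    | inl p =>
      simp only [GRel] at h
      simp [h]
    | inr w =>
      cases w with
      | inl w' =>
        exfalso; apply hy
        simp only [GRel] at h
        exact ⟨w'.2, by simp [Prod.ext_iff, h]⟩
      | inr w' => exact absurd h (by simp [GRel])

lemma exitOnly_IK33 (c : NonnegInt) : ExitOnly (IK33 c) (Sum.inl (c.1, 0)) := by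
  rintro x y ⟨j, rfl⟩ hadj hy
  rcases adjG hadj with ⟨hne, h | h⟩
  · cases y with
    | inl p => exact absurd h (by simp [GRel])
    | inr w =>
      cases w with
      | inl w' => exact absurd h (by simp [GRel])
      | inr w' =>
        exfalso; apply hy
        simp only [GRel] at h
        exact ⟨w'.2, by simp [Prod.ext_iff, h.1]⟩
  · cases y with
    | inl p =>
      simp only [GRel] at h
      simp [h.1]
    | inr w =>
      cases w with
      | inl w' => exact absurd h (by simp [GRel])
      | inr w' =>
        exfalso; apply hy
        simp only [GRel] at h
        exact ⟨w'.2, by simp [Prod.ext_iff, h.1]⟩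

/-- L0: support of a path between grid vertices lies in the grid. -/
lemma support_subset_grid {p q : ℤ × ℕ} (W : GraphG.Walk (Sum.inl p) (Sum.inl q))
    (hW : W.IsPath) : ∀ w ∈ W.support, ∃ r : ℤ × ℕ, w = Sum.inl r := by
  intro w hw
  cases w with
  | inl r => exact ⟨r, rfl⟩
  | inr w' =>
    exfalso
    cases w' with
    | inl z =>
      exact path_avoids_interior (exitOnly_IK5 z.1) W hW (by rintro ⟨j, h⟩; simp at h)
        (by rintro ⟨j, h⟩; simp at h) _ hw ⟨z.2, rfl⟩
    | inr z =>
      exact path_avoids_interior (exitOnly_IK33 z.1) W hW (by rintro ⟨j, h⟩; simp at h)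
        (by rintro ⟨j, h⟩; simp at h) _ hw ⟨z.2, rfl⟩

end S9Aux
namespace S9Aux

def inHalf (c : ℤ) : GV → Bool
  | Sum.inl r => decide (r.1 < c)
  | _ => false

def inBox (c : ℤ) (y : ℕ) : GV → Bool
  | Sum.inl r => decide (r.1 = c) && decide (r.2 ≤ y)
  | _ => false

def crossB (Bf : GV → Bool) (d : GraphG.Dart) : Bool := Bf d.fst != Bf d.snd

def LB (c : ℤ) (y : ℕ) (d : GraphG.Dart) : Bool :=
  crossB (inHalf c) d && (inBox c y d.fst || inBox c y d.snd)

def hgt : GV → ℕ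
  | Sum.inl r => r.2
  | _ => 0

def col : GV → ℤ
  | Sum.inl r => r.1
  | Sum.inr (Sum.inl w) => w.1.1
  | Sum.inr (Sum.inr w) => w.1.1

section PathFacts

variable {av bv : ℤ} (p : GraphG.Walk (Sum.inl (av, 0)) (Sum.inl (bv, 0)))

/-- endpoints of darts of `p` are grid vertices -/
lemma dart_ends_grid (hp : p.IsPath) {d : GraphG.Dart} (hd : d ∈ p.darts) :
    (∃ r : ℤ × ℕ, d.fst = Sum.inl r) ∧ (∃ s : ℤ × ℕ, d.snd = Sum.inl s) :=
  ⟨support_subset_grid p hp _ (SimpleGraph.Walk.dart_fst_mem_support_of_mem_darts _ hd),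
   support_subset_grid p hp _ (SimpleGraph.Walk.dart_snd_mem_support_of_mem_darts _ hd)⟩

lemma grid_rel_of_dart (hp : p.IsPath) {d : GraphG.Dart} (hd : d ∈ p.darts)
    {r s : ℤ × ℕ} (hr : d.fst = Sum.inl r) (hs : d.snd = Sum.inl s) :
    GridRel r s ∨ GridRel s r := by
  have hadj : GraphG.Adj d.fst d.snd := d.adj
  rw [hr, hs] at hadj
  rcases adjG hadj with ⟨-, h | h⟩
  · left; exact h
  · right; exact h

/-- structure of darts crossing the vertical line at `c`. -/
lemma dart_horiz (hp : p.IsPath) {c : ℤ} {d : GraphG.Dart} (hd : d ∈ p.darts)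
    (hc : crossB (inHalf c) d = true) :
    ∃ h : ℕ, (d.fst = Sum.inl (c-1, h) ∧ d.snd = Sum.inl (c, h)) ∨
      (d.fst = Sum.inl (c, h) ∧ d.snd = Sum.inl (c-1, h)) := by
  obtain ⟨⟨r, hr⟩, ⟨s, hs⟩⟩ := dart_ends_grid p hp hd
  have hgr := grid_rel_of_dart p hp hd hr hs
  have hc' : (inHalf c (Sum.inl r) != inHalf c (Sum.inl s)) = true := by
    rw [← hr, ← hs]; exact hc
  simp only [inHalf, bne_iff_ne, ne_eq, decide_eq_decide] at hc'
  rw [hr, hs]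
  unfold GridRel at hgr
  rcases hgr with (h | h) | (h | h)
  · refine ⟨r.2, Or.inl ⟨?_, ?_⟩⟩
    · have : r.1 = c - 1 := by omega
      rw [show ((c-1 : ℤ), r.2) = (r.1, r.2) by rw [this]]
    · have h1 : s.1 = c := by omega
      have h2 : s.2 = r.2 := h.2
      rw [show ((c : ℤ), r.2) = (s.1, s.2) by rw [h1, h2]]
  · exfalso; omega
  · refine ⟨s.2, Or.inr ⟨?_, ?_⟩⟩
    · have h1 : r.1 = c := by omega
      rw [show ((c : ℤ), s.2) = (r.1, r.2) by rw [h1, h.2]]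
    · have : s.1 = c - 1 := by omega
      rw [show ((c-1 : ℤ), s.2) = (s.1, s.2) by rw [this]]
  · exfalso; omega

/-- half-plane crossing parity -/
lemma half_parity (c : ℤ) :
    (p.darts.countP (crossB (inHalf c)) + (if av < c then 1 else 0)
      + (if bv < c then 1 else 0)) % 2 = 0 := by
  have := crossings_parity (inHalf c) p
  simp only [show crossB (inHalf c) = fun d => inHalf c d.fst != inHalf c d.snd from rfl]
  simpa [inHalf, crossB] using this

/-- box crossing parity -/
lemma box_parity (c : ℤ) (y : ℕ) :
    (p.darts.countP (crossB (inBox c y)) + (if av = c then 1 else 0)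
      + (if bv = c then 1 else 0)) % 2 = 0 := by
  have := crossings_parity (inBox c y) p
  simp only [show crossB (inBox c y) = fun d => inBox c y d.fst != inBox c y d.snd from rfl]
  simpa [inBox, crossB] using this

/-- splitting box crossings into left and right line crossings, when the top
corner is not on the path -/
lemma box_split (hp : p.IsPath) {c : ℤ} {y : ℕ} (hnm : Sum.inl (c, y) ∉ p.support) :
    p.darts.countP (crossB (inBox c y))
      = p.darts.countP (LB c y) + p.darts.countP (LB (c+1) y) := by
  have hpt : ∀ d ∈ p.darts, crossB (inBox c y) d = (LB c y d || LB (c+1) y d) := by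
    intro d hd
    obtain ⟨⟨r, hr⟩, ⟨s, hs⟩⟩ := dart_ends_grid p hp hd
    have hgr := grid_rel_of_dart p hp hd hr hs
    have hrne : r ≠ (c, y) := by
      rintro rfl
      exact hnm (hr ▸ SimpleGraph.Walk.dart_fst_mem_support_of_mem_darts _ hd)
    have hsne : s ≠ (c, y) := by
      rintro rfl
      exact hnm (hs ▸ SimpleGraph.Walk.dart_snd_mem_support_of_mem_darts _ hd)
    simp only [ne_eq, Prod.ext_iff, not_and_or] at hrne hsne
    simp only [crossB, LB, inBox, inHalf, hr, hs]
    rw [Bool.eq_iff_iff]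
    simp only [Bool.and_eq_true, Bool.or_eq_true, bne_iff_ne, ne_eq,
      ← Bool.decide_and, decide_eq_decide, decide_eq_true_eq]
    unfold GridRel at hgr
    rcases hgr with (h | h) | (h | h) <;> omega
  rw [List.countP_congr (fun d hd => by rw [hpt d hd])]
  apply countP_or_disjoint
  intro d hd ⟨h1, h2⟩
  obtain ⟨h', hor⟩ := dart_horiz p hp hd (by simp only [LB, Bool.and_eq_true] at h1; exact h1.1)
  obtain ⟨h'', hor'⟩ := dart_horiz p hp hd (by simp only [LB, Bool.and_eq_true] at h2; exact h2.1)
  rcases hor with ⟨e1, e2⟩ | ⟨e1, e2⟩ <;> rcases hor' with ⟨e3, e4⟩ | ⟨e3, e4⟩ <;>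
    · rw [e1] at e3; rw [e2] at e4
      simp only [Sum.inl.injEq, Prod.ext_iff] at e3 e4
      omega

/-- vertical invariance of lowcount -/
lemma lowcount_succ (hp : p.IsPath) {c : ℤ} {y : ℕ} (hnm : Sum.inl (c, y+1) ∉ p.support) :
    p.darts.countP (LB c (y+1)) = p.darts.countP (LB c y) := by
  apply List.countP_congr
  intro d hd
  rw [← Bool.eq_iff_iff]
  obtain ⟨⟨r, hr⟩, ⟨s, hs⟩⟩ := dart_ends_grid p hp hd
  have hrne : r ≠ (c, y+1) := by
    rintro rfl
    exact hnm (hr ▸ SimpleGraph.Walk.dart_fst_mem_support_of_mem_darts _ hd)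
  have hsne : s ≠ (c, y+1) := by
    rintro rfl
    exact hnm (hs ▸ SimpleGraph.Walk.dart_snd_mem_support_of_mem_darts _ hd)
  simp only [ne_eq, Prod.ext_iff, not_and_or] at hrne hsne
  simp only [LB, crossB, inBox, inHalf, hr, hs]
  rw [Bool.eq_iff_iff]
  simp only [Bool.and_eq_true, Bool.or_eq_true, bne_iff_ne, ne_eq,
    ← Bool.decide_and, decide_eq_decide, decide_eq_true_eq]
  omega

/-- stabilization: above the maximum height, lowcount equals the total count -/
lemma lowcount_total (hp : p.IsPath) {c : ℤ} {y : ℕ}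
    (hy : ∀ w ∈ p.support, hgt w ≤ y) :
    p.darts.countP (LB c y) = p.darts.countP (crossB (inHalf c)) := by
  apply List.countP_congr
  intro d hd
  rw [← Bool.eq_iff_iff]
  simp only [LB]
  cases hcr : crossB (inHalf c) d
  · simp
  · simp only [Bool.true_and]
    obtain ⟨h', hor⟩ := dart_horiz p hp hd hcr
    have hf := SimpleGraph.Walk.dart_fst_mem_support_of_mem_darts _ hd
    have hsn := SimpleGraph.Walk.dart_snd_mem_support_of_mem_darts _ hd
    rcases hor with ⟨e1, e2⟩ | ⟨e1, e2⟩
    · have := hy _ (e2 ▸ hsn)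
      simp only [hgt] at this
      simp only [inBox, e2]
      simp only [decide_eq_true_eq, Bool.or_eq_true, Bool.and_eq_true]
      right; exact ⟨by simp, by simpa using this⟩
    · have := hy _ (e1 ▸ hf)
      simp only [hgt] at this
      simp only [inBox, e1]
      simp only [decide_eq_true_eq, Bool.or_eq_true, Bool.and_eq_true]
      left; exact ⟨by simp, by simpa using this⟩

end PathFacts

end S9Aux
namespace S9Aux

section Parity

variable {av bv : ℤ} (p : GraphG.Walk (Sum.inl (av, 0)) (Sum.inl (bv, 0)))

/-- the parity function -/
def px (c : ℤ) (y : ℕ) : ℕ :=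
  (p.darts.countP (LB c y) + (if av < c ∧ c ≤ bv then 1 else 0)) % 2

def Par (v : GV) : ℕ := px p (col v) (hgt v)

lemma px_lt_two (c : ℤ) (y : ℕ) : px p c y < 2 := Nat.mod_lt _ (by norm_num)

/-- horizontal invariance -/
lemma px_horiz (hp : p.IsPath) (hav : av < 0) (hbv : 0 ≤ bv) {c : ℤ} {y : ℕ}
    (hnm : Sum.inl (c, y) ∉ p.support) :
    px p c y = px p (c+1) y := by
  have hsplit := box_split p hp hnm
  have hbox := box_parity p c y
  rw [hsplit] at hbox
  unfold px
  split_ifs at hbox ⊢ <;> omega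

/-- vertical invariance -/
lemma px_vert (hp : p.IsPath) {c : ℤ} {y : ℕ}
    (hnm : Sum.inl (c, y+1) ∉ p.support) :
    px p c y = px p c (y+1) := by
  unfold px
  rw [lowcount_succ p hp hnm]

/-- vanishing above the path -/
lemma px_high (hp : p.IsPath) (hav : av < 0) (hbv : 0 ≤ bv) {c : ℤ} {y : ℕ}
    (hy : ∀ w ∈ p.support, hgt w ≤ y) :
    px p c y = 0 := by
  have hh := half_parity p c
  unfold px
  rw [lowcount_total p hp hy]
  split_ifs at hh ⊢ <;> omega

/-- invariance of `Par` along one direction of `GRel` -/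
lemma par_grel (hp : p.IsPath) (hav : av < 0) (hbv : 0 ≤ bv) {u w : GV}
    (hu : u ∉ p.support) (hw : w ∉ p.support) (h : GRel u w) :
    Par p u = Par p w := by
  cases u with
  | inl r =>
    cases w with
    | inl s =>
      simp only [GRel, GridRel] at h
      rcases h with ⟨h1, h2⟩ | ⟨h1, h2⟩
      · -- horizontal
        have : Par p (Sum.inl r) = px p r.1 r.2 := rfl
        rw [this]
        have : Par p (Sum.inl s) = px p s.1 s.2 := rfl
        rw [this, h1, h2]
        exact px_horiz p hp hav hbv (by
          have : Sum.inl (r.1, r.2) = (Sum.inl r : GV) := by simp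
          rw [this]; exact hu)
      · -- vertical
        show px p r.1 r.2 = px p s.1 s.2
        rw [h1, h2]
        exact px_vert p hp (by
          have : Sum.inl (r.1, r.2 + 1) = (Sum.inl s : GV) := by
            rw [← h1, ← h2]
          rw [this]; exact hw)
    | inr w' =>
      cases w' with
      | inl z =>
        simp only [GRel] at h
        show px p r.1 r.2 = px p z.1.1 0
        rw [h]
      | inr z =>
        simp only [GRel] at h
        show px p r.1 r.2 = px p z.1.1 0
        rw [h.1]
  | inr u' =>
    cases u' with
    | inl z =>
      cases w with
      | inl s => exact absurd h (by simp [GRel])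
      | inr w' =>
        cases w' with
        | inl z' =>
          simp only [GRel] at h
          show px p z.1.1 0 = px p z'.1.1 0
          rw [h]
        | inr z' => exact absurd h (by simp [GRel])
    | inr z =>
      cases w with
      | inl s => exact absurd h (by simp [GRel])
      | inr w' =>
        cases w' with
        | inl z' => exact absurd h (by simp [GRel])
        | inr z' =>
          simp only [GRel] at h
          show px p z.1.1 0 = px p z'.1.1 0
          rw [h.1]

lemma par_adj (hp : p.IsPath) (hav : av < 0) (hbv : 0 ≤ bv) {u w : GV}
    (hu : u ∉ p.support) (hw : w ∉ p.support) (h : GraphG.Adj u w) :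
    Par p u = Par p w := by
  rcases adjG h with ⟨-, h | h⟩
  · exact par_grel p hp hav hbv hu hw h
  · exact (par_grel p hp hav hbv hw hu h).symm

/-- `Par` is constant on connected components of the graph minus the path -/
lemma par_walk (hp : p.IsPath) (hav : av < 0) (hbv : 0 ≤ bv)
    {x y : {v : GV // v ∈ {v | v ∈ p.support}ᶜ}}
    (W : (GraphG.induce {v | v ∈ p.support}ᶜ).Walk x y) :
    Par p x.1 = Par p y.1 := by
  induction W with
  | nil => rfl
  | @cons u uu vv hadj q ih =>
    have : GraphG.Adj u.1 uu.1 := hadj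
    exact (par_adj p hp hav hbv u.2 uu.2 this).trans ih

end Parity

end S9Aux
namespace S9Aux

lemma col_of_inBox {c : ℤ} {y : ℕ} {v : GV} (h : inBox c y v = true) : col v = c := by
  cases v with
  | inl r =>
    simp only [inBox, Bool.and_eq_true, decide_eq_true_eq] at h
    exact h.1
  | inr w => cases w <;> simp [inBox] at h

section Parity2

variable {av bv : ℤ} (p : GraphG.Walk (Sum.inl (av, 0)) (Sum.inl (bv, 0)))

lemma col_mem_of_px {c : ℤ} {y : ℕ} (hpx : px p c y = 1) :
    (∃ w ∈ p.support, col w = c) ∨ (av < c ∧ c ≤ bv) := by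
  by_cases hf : av < c ∧ c ≤ bv
  · right; exact hf
  left
  unfold px at hpx
  rw [if_neg hf] at hpx
  have hne : 0 < p.darts.countP (LB c y) := by omega
  obtain ⟨d, hd, hLB⟩ := List.countP_pos_iff.mp hne
  simp only [LB, Bool.and_eq_true, Bool.or_eq_true] at hLB
  rcases hLB.2 with hbx | hbx
  · exact ⟨d.fst, SimpleGraph.Walk.dart_fst_mem_support_of_mem_darts _ hd, col_of_inBox hbx⟩
  · exact ⟨d.snd, SimpleGraph.Walk.dart_snd_mem_support_of_mem_darts _ hd, col_of_inBox hbx⟩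

lemma par_one_finite (hp : p.IsPath) (hav : av < 0) (hbv : 0 ≤ bv) :
    {v : GV | Par p v = 1}.Finite := by
  classical
  set maxH : ℕ := (p.support.map hgt).foldr max 0 with hmaxH
  have hy : ∀ w ∈ p.support, hgt w ≤ maxH :=
    fun w hw => le_foldr_max _ _ (List.mem_map_of_mem hw)
  set CS : Set ℤ := (col '' {w | w ∈ p.support}) ∪ Set.Ioc av bv with hCS
  have hCSfin : CS.Finite :=
    (p.support.finite_toSet.image col).union (Set.finite_Ioc av bv)
  have hkey : ∀ c y, px p c y = 1 → c ∈ CS := by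
    intro c y h
    rcases col_mem_of_px p h with ⟨w, hw, hwc⟩ | h2
    · exact Or.inl ⟨w, hw, hwc⟩
    · exact Or.inr h2
  have hsub : {v : GV | Par p v = 1} ⊆
      (Sum.inl '' (CS ×ˢ Set.Iic maxH)) ∪
      ((fun w : NegInt × Fin 4 => (Sum.inr (Sum.inl w) : GV)) ''
        (({a : NegInt | (a : ℤ) ∈ CS}) ×ˢ (Set.univ : Set (Fin 4)))) ∪
      ((fun w : NonnegInt × Fin 5 => (Sum.inr (Sum.inr w) : GV)) ''
        (({a : NonnegInt | (a : ℤ) ∈ CS}) ×ˢ (Set.univ : Set (Fin 5)))) := by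
    intro v hv
    cases v with
    | inl r =>
      left; left
      refine ⟨r, ⟨hkey r.1 r.2 hv, ?_⟩, rfl⟩
      by_contra hyy
      simp only [Set.mem_Iic, not_le] at hyy
      have h0 : px p r.1 r.2 = 0 :=
        px_high p hp hav hbv (fun w hw => le_trans (hy w hw) (le_of_lt hyy))
      have h1 : Par p (Sum.inl r) = 1 := hv
      have h2 : Par p (Sum.inl r) = px p r.1 r.2 := rfl
      omega
    | inr w =>
      cases w with
      | inl z =>
        left; right
        exact ⟨z, ⟨hkey z.1.1 0 hv, Set.mem_univ _⟩, rfl⟩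
      | inr z =>
        right
        exact ⟨z, ⟨hkey z.1.1 0 hv, Set.mem_univ _⟩, rfl⟩
  refine Set.Finite.subset ?_ hsub
  refine (Set.Finite.union ?_ ?_).union ?_
  · exact ((hCSfin.prod (Set.finite_Iic maxH)).image _)
  · refine Set.Finite.image _ (Set.Finite.prod ?_ (Set.finite_univ))
    exact Set.Finite.preimage (Subtype.val_injective.injOn) hCSfin
  · refine Set.Finite.image _ (Set.Finite.prod ?_ (Set.finite_univ))
    exact Set.Finite.preimage (Subtype.val_injective.injOn) hCSfin

end Parity2

/-- in the graph minus a set T containing base, anything reachable from the interior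
stays in the interior -/
lemma reach_stays_interior {I : Set GV} {base : GV} (hI : ExitOnly I base)
    {T : Set GV} (hbase : base ∉ T) :
    ∀ {x y : {v : GV // v ∈ T}} (_ : (GraphG.induce T).Walk x y), x.1 ∈ I → y.1 ∈ I := by
  intro x y W
  induction W with
  | nil => exact id
  | @cons u uu vv hadj q ih =>
    intro hx
    apply ih
    have hAdj : GraphG.Adj u.1 uu.1 := hadj
    by_contra huu
    have : uu.1 = base := hI hx hAdj huu
    exact hbase (this ▸ uu.2)

lemma IK5_finite (c : NegInt) : (IK5 c).Finite := by
  have : IK5 c = Set.range (fun j : Fin 4 => (Sum.inr (Sum.inl (c, j)) : GV)) := by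
    ext v; constructor
    · rintro ⟨j, rfl⟩; exact ⟨j, rfl⟩
    · rintro ⟨j, rfl⟩; exact ⟨j, rfl⟩
  rw [this]; exact Set.finite_range _

lemma IK33_finite (c : NonnegInt) : (IK33 c).Finite := by
  have : IK33 c = Set.range (fun j : Fin 5 => (Sum.inr (Sum.inr (c, j)) : GV)) := by
    ext v; constructor
    · rintro ⟨j, rfl⟩; exact ⟨j, rfl⟩
    · rintro ⟨j, rfl⟩; exact ⟨j, rfl⟩
  rw [this]; exact Set.finite_range _

end S9Aux
namespace S9Aux

lemma inBox_elim {c : ℤ} {y : ℕ} {v : GV} (h : inBox c y v = true) :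
    ∃ h' : ℕ, h' ≤ y ∧ v = Sum.inl (c, h') := by
  cases v with
  | inl r =>
    simp only [inBox, Bool.and_eq_true, decide_eq_true_eq] at h
    exact ⟨r.2, h.2, by rw [show ((c : ℤ), r.2) = r by rw [← h.1]]⟩
  | inr w => cases w <;> simp [inBox] at h

lemma comp_finite_of_interior {T : Set GV} {I : Set GV} {base : GV}
    (hI : ExitOnly I base) (hIfin : I.Finite) (hbase : base ∉ T)
    {x : {v : GV // v ∈ T}} (hx : x.1 ∈ I) :
    ((GraphG.induce T).connectedComponentMk x).supp.Finite := by
  apply Set.Finite.subset (hIfin.preimage (Subtype.val_injective.injOn))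
  intro u hu
  rw [SimpleGraph.ConnectedComponent.mem_supp_iff] at hu
  have hr : (GraphG.induce T).Reachable x u :=
    (SimpleGraph.ConnectedComponent.exact hu).symm
  obtain ⟨W⟩ := hr
  exact reach_stays_interior hI hbase W hx

end S9Aux

open S9Aux in
/-- If `(P i)` is an infinite family of pairwise vertex-disjoint paths in
`G`, each joining a vertex `(a i, 0)` with `a i < 0` to a vertex `(b i, 0)` with
`b i ≥ 0`, and `C i` is (the vertex set of) the unique infinite component of
`G − V(P i)`, then `⋂ i, C i = ∅`. -/
theorem statement9 (a b : ℕ → ℤ) (ha : ∀ i, a i < 0) (hb : ∀ i, 0 ≤ b i)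
    (P : ∀ i : ℕ, GraphG.Walk (Sum.inl (a i, 0)) (Sum.inl (b i, 0)))
    (hpath : ∀ i, (P i).IsPath)
    (hdisj : ∀ ⦃i j : ℕ⦄, i ≠ j →
      Disjoint {v | v ∈ (P i).support} {v | v ∈ (P j).support})
    (C : ℕ → Set GV)
    (hC : ∀ i, ∃ D : (GraphG.induce {v | v ∈ (P i).support}ᶜ).ConnectedComponent,
      D.supp.Infinite ∧ C i = Subtype.val '' D.supp) :
    ⋂ i, C i = ∅ := by
  classical
  by_contra hne
  obtain ⟨v, hv⟩ := Set.nonempty_iff_ne_empty.mpr hne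
  simp only [Set.mem_iInter] at hv
  -- at most one path through any given vertex
  have hsingle : ∀ (w : GV) (i j : ℕ), w ∈ (P i).support → w ∈ (P j).support → i = j := by
    intro w i j hi hj
    by_contra hneij
    exact Set.disjoint_left.mp (hdisj hneij) hi hj
  -- main argument for grid vertices
  have main : ∀ (x : ℤ) (y : ℕ), (∀ i, Sum.inl (x, y) ∈ C i) → False := by
    intro x y hall
    -- the three finite "bad" sets of indices
    have bad1 : {i : ℕ | x ≤ a i}.Finite := by
      have hainj : Function.Injective a := by
        intro i j hij
        exact hsingle (Sum.inl (a i, 0)) i j (P i).start_mem_support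
          (by rw [hij]; exact (P j).start_mem_support)
      have : {i : ℕ | x ≤ a i} ⊆ a ⁻¹' (Set.Icc x (-1)) := by
        intro i hi
        exact ⟨hi, by have := ha i; omega⟩
      exact Set.Finite.subset ((Set.finite_Icc x (-1)).preimage hainj.injOn) this
    have bad2 : {i : ℕ | b i < x}.Finite := by
      have hbinj : Function.Injective b := by
        intro i j hij
        exact hsingle (Sum.inl (b i, 0)) i j (P i).end_mem_support
          (by rw [hij]; exact (P j).end_mem_support)
      have : {i : ℕ | b i < x} ⊆ b ⁻¹' (Set.Icc 0 (x-1)) := by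
        intro i hi
        have hix : b i < x := hi
        exact ⟨hb i, by omega⟩
      exact Set.Finite.subset ((Set.finite_Icc 0 (x-1)).preimage hbinj.injOn) this
    have bad3 : {i : ℕ | ∃ h' ≤ y, Sum.inl (x, h') ∈ (P i).support}.Finite := by
      have hsub : {i : ℕ | ∃ h' ≤ y, Sum.inl (x, h') ∈ (P i).support} ⊆
          ⋃ h' ∈ Set.Iic y, {i : ℕ | Sum.inl (x, h') ∈ (P i).support} := by
        rintro i ⟨h', hh', hmem⟩
        exact Set.mem_biUnion hh' hmem
      refine Set.Finite.subset (Set.Finite.biUnion (Set.finite_Iic y) ?_) hsub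
      intro h' _
      apply Set.Subsingleton.finite
      intro i hi j hj
      exact hsingle _ i j hi hj
    -- choose a good index
    obtain ⟨i, hi⟩ := (Set.Finite.infinite_compl ((bad1.union bad2).union bad3)).nonempty
    simp only [Set.mem_compl_iff, Set.mem_union, Set.mem_setOf_eq, not_or, not_le,
      not_lt, not_exists] at hi
    obtain ⟨⟨hax, hbx⟩, hnosupp⟩ := hi
    -- for this index the parity of (x,y) is 1
    have hlow : (P i).darts.countP (LB x y) = 0 := by
      rw [List.countP_eq_zero]
      intro d hd
      simp only [LB, Bool.and_eq_true, Bool.or_eq_true]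
      rintro ⟨-, hbx' | hbx'⟩
      · obtain ⟨h', hh', he⟩ := inBox_elim hbx'
        exact (hnosupp h') ⟨hh',
          he ▸ SimpleGraph.Walk.dart_fst_mem_support_of_mem_darts _ hd⟩
      · obtain ⟨h', hh', he⟩ := inBox_elim hbx'
        exact (hnosupp h') ⟨hh',
          he ▸ SimpleGraph.Walk.dart_snd_mem_support_of_mem_darts _ hd⟩
    have hpx : px (P i) x y = 1 := by
      unfold px
      rw [hlow, if_pos ⟨hax, hbx⟩]
    -- the component containing (x,y)
    obtain ⟨D, hDinf, hCeq⟩ := hC i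
    have hvC := hall i
    rw [hCeq] at hvC
    obtain ⟨u, huD, huval⟩ := hvC
    -- Par is 1 on all of D.supp
    have hPar : ∀ w ∈ D.supp, Par (P i) w.1 = 1 := by
      intro w hw
      rw [SimpleGraph.ConnectedComponent.mem_supp_iff] at hw huD
      have hreach := SimpleGraph.ConnectedComponent.exact (hw.trans huD.symm)
      obtain ⟨W⟩ := hreach
      have := par_walk (P i) (hpath i) (ha i) (hb i) W
      rw [this, huval]
      exact hpx
    -- but the set where Par = 1 is finite, contradicting infinitude of D.supp
    have hfin : D.supp.Finite := by
      apply Set.Finite.subset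
        (((par_one_finite (P i) (hpath i) (ha i) (hb i))).preimage
          (Subtype.val_injective.injOn))
      intro w hw
      exact hPar w hw
    exact hDinf hfin
  -- reduction: every vertex reduces to a grid vertex
  -- first: all `inr` vertices are never on any path (supports are grid-only)
  have hinr_not : ∀ (i : ℕ) (w : GV), (∀ r : ℤ × ℕ, w ≠ Sum.inl r) →
      w ∉ (P i).support := by
    intro i w hw hmem
    obtain ⟨r, hr⟩ := support_subset_grid (P i) (hpath i) w hmem
    exact hw r hr
  -- reduction lemma: if v is in an interior whose base is `base`, and v is adjacent
  -- (within the complement) to base via a chain, then base ∈ C i for all i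
  have hbase_mem : ∀ (I : Set GV) (cI : ℤ) (hI : ExitOnly I (Sum.inl (cI, 0)))
      (hIfin : I.Finite) (hvI : v ∈ I)
      (hchain : ∀ (i : ℕ) (T : Set GV) (_ : T = {w | w ∈ (P i).support}ᶜ)
        (hvT : v ∈ T) (hbT : Sum.inl (cI, 0) ∈ T),
        (GraphG.induce T).Reachable ⟨v, hvT⟩ ⟨Sum.inl (cI, 0), hbT⟩),
      ∀ i : ℕ, Sum.inl (cI, 0) ∈ C i := by
    intro I cI hI hIfin hvI hchain i
    obtain ⟨D, hDinf, hCeq⟩ := hC i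
    have hvC := hv i
    rw [hCeq] at hvC
    obtain ⟨u, huD, huval⟩ := hvC
    have hvT : v ∈ {w | w ∈ (P i).support}ᶜ := huval ▸ u.2
    -- base is not on the path
    have hbT : Sum.inl (cI, 0) ∈ {w | w ∈ (P i).support}ᶜ := by
      by_contra hbase
      simp only [Set.mem_compl_iff, Set.mem_setOf_eq, not_not] at hbase
      have hbase' : Sum.inl (cI, 0) ∉ ({w | w ∈ (P i).support}ᶜ : Set GV) := by
        simp [hbase]
      have hufin := comp_finite_of_interior hI hIfin hbase'
        (x := ⟨v, hvT⟩) hvI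
      have : u = ⟨v, hvT⟩ := Subtype.ext huval
      rw [SimpleGraph.ConnectedComponent.mem_supp_iff, this] at huD
      rw [huD] at hufin
      exact hDinf hufin
    -- base is in the same component
    have hreach := hchain i _ rfl hvT hbT
    have : u = ⟨v, hvT⟩ := Subtype.ext huval
    rw [SimpleGraph.ConnectedComponent.mem_supp_iff, this] at huD
    rw [hCeq]
    refine ⟨⟨Sum.inl (cI, 0), hbT⟩, ?_, rfl⟩
    rw [SimpleGraph.ConnectedComponent.mem_supp_iff, ← huD]
    exact SimpleGraph.ConnectedComponent.sound hreach.symm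
  -- now case on v
  cases v with
  | inl r => exact main r.1 r.2 (fun i => hv i)
  | inr w =>
    cases w with
    | inl z =>
      refine main z.1.1 0 (hbase_mem (IK5 z.1) z.1.1 (exitOnly_IK5 z.1)
        (IK5_finite z.1) ⟨z.2, rfl⟩ ?_)
      intro i T hT hvT hbT
      apply SimpleGraph.Adj.reachable
      show GraphG.Adj (Sum.inr (Sum.inl z)) (Sum.inl (z.1.1, 0))
      exact ⟨by simp, Or.inr rfl⟩
    | inr z =>
      obtain ⟨zb, zj⟩ := z
      refine main zb.1 0 (hbase_mem (IK33 zb) zb.1 (exitOnly_IK33 zb)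
        (IK33_finite zb) ⟨zj, rfl⟩ ?_)
      intro i T hT hvT hbT
      by_cases h2 : 2 ≤ (zj : ℕ)
      · apply SimpleGraph.Adj.reachable
        show GraphG.Adj (Sum.inr (Sum.inr (zb, zj))) (Sum.inl (zb.1, 0))
        exact ⟨by simp, Or.inr ⟨rfl, h2⟩⟩
      · -- go through the vertex (z.1, 2)
        push_neg at h2
        have hmT : (Sum.inr (Sum.inr (zb, (2 : Fin 5))) : GV) ∈ T := by
          rw [hT]
          exact hinr_not i _ (by intro r h; simp at h)
        have had1 : GraphG.Adj (Sum.inr (Sum.inr (zb, zj)) : GV)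
            (Sum.inr (Sum.inr (zb, (2 : Fin 5)))) := by
          refine ⟨?_, Or.inl ⟨rfl, h2, by norm_num⟩⟩
          simp only [ne_eq, Sum.inr.injEq, Prod.mk.injEq, true_and]
          intro h5
          rw [h5] at h2
          norm_num at h2
        have had2 : GraphG.Adj (Sum.inr (Sum.inr (zb, (2 : Fin 5))) : GV)
            (Sum.inl (zb.1, 0)) := by
          exact ⟨by simp, Or.inr ⟨rfl, by norm_num⟩⟩
        have r1 : (GraphG.induce T).Reachable ⟨Sum.inr (Sum.inr (zb, zj)), hvT⟩
            ⟨Sum.inr (Sum.inr (zb, (2 : Fin 5))), hmT⟩ :=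
          SimpleGraph.Adj.reachable had1
        have r2 : (GraphG.induce T).Reachable ⟨Sum.inr (Sum.inr (zb, (2 : Fin 5))), hmT⟩
            ⟨Sum.inl (zb.1, 0), hbT⟩ :=
          SimpleGraph.Adj.reachable had2
        exact r1.trans r2
end

section
/- Every 2-connected subgraph of the graph G is contained in the half-grid subgraph, in one of the attached K₅-subgraphs, or in one of the attached K₃,₃-subgraphs; consequently, the maximal 2-connected subgraphs of G are exactly the half-grid together with the attached K₅-subgraphs and the attached K₃,₃-subgraphs. -/
open SimpleGraph

/-- A graph is 2-connected if it has at least 3 vertices, is connected, and remains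
connected after the deletion of any single vertex. -/
def TwoConnected {α : Type*} (X : SimpleGraph α) : Prop :=
  (∃ x y z : α, x ≠ y ∧ y ≠ z ∧ x ≠ z) ∧ X.Connected ∧
    ∀ v : α, (X.induce {w | w ≠ v}).Connected

/-- The half-grid as a subgraph of `G`. -/
def gridSub : GraphG.Subgraph :=
  (⊤ : GraphG.Subgraph).induce (Set.range Sum.inl)

/-- The attached `K₅` at `(a,0)` as a subgraph of `G`. -/
def k5Sub (a : NegInt) : GraphG.Subgraph :=
  (⊤ : GraphG.Subgraph).induce (K5copy a)

/-- The attached `K₃,₃` at `(b,0)` as a subgraph of `G`. -/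
def k33Sub (b : NonnegInt) : GraphG.Subgraph :=
  (⊤ : GraphG.Subgraph).induce (K33copy b)

/-! ### Auxiliary material for statement11 -/

namespace Statement11Aux

open SimpleGraph Walk

lemma gadj_iff {x y : GV} : GraphG.Adj x y ↔ x ≠ y ∧ (GRel x y ∨ GRel y x) := Iff.rfl

lemma gadj {x y : GV} (hne : x ≠ y) (h : GRel x y ∨ GRel y x) : GraphG.Adj x y := ⟨hne, h⟩

/-- inner vertices of the K5 copy at `a`. -/
def K5inner (a : NegInt) : Set GV := {x | ∃ i : Fin 4, x = Sum.inr (Sum.inl (a, i))}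

/-- inner vertices of the K33 copy at `b`. -/
def K33inner (b : NonnegInt) : Set GV := {x | ∃ i : Fin 5, x = Sum.inr (Sum.inr (b, i))}

lemma K5copy_eq (a : NegInt) : K5copy a = insert (Sum.inl (a.1, 0)) (K5inner a) := by
  simp [K5copy, K5inner, Set.singleton_union]

lemma K33copy_eq (b : NonnegInt) : K33copy b = insert (Sum.inl (b.1, 0)) (K33inner b) := by
  simp [K33copy, K33inner, Set.singleton_union]

lemma k5_nbr {a : NegInt} {u z : GV} (hu : u ∈ K5inner a) (h : GraphG.Adj u z) :
    z = Sum.inl (a.1, 0) ∨ z ∈ K5inner a := by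
  obtain ⟨i, rfl⟩ := hu
  rw [gadj_iff] at h
  obtain ⟨-, h | h⟩ := h
  · rcases z with p | (w | w) <;> simp only [GRel] at h
    exact Or.inr ⟨w.2, by rcases w with ⟨a', j⟩; cases h; rfl⟩
  · rcases z with p | (w | w) <;> simp only [GRel] at h
    · exact Or.inl (by rw [h])
    · exact Or.inr ⟨w.2, by rcases w with ⟨a', j⟩; cases h; rfl⟩

lemma k33_nbr {b : NonnegInt} {u z : GV} (hu : u ∈ K33inner b) (h : GraphG.Adj u z) :
    z = Sum.inl (b.1, 0) ∨ z ∈ K33inner b := by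
  obtain ⟨i, rfl⟩ := hu
  rw [gadj_iff] at h
  obtain ⟨-, h | h⟩ := h
  · rcases z with p | (w | w) <;> simp only [GRel] at h
    exact Or.inr ⟨w.2, by rcases w with ⟨b', j⟩; cases h.1; rfl⟩
  · rcases z with p | (w | w) <;> simp only [GRel] at h
    · exact Or.inl (by rw [h.1])
    · exact Or.inr ⟨w.2, by rcases w with ⟨b', j⟩; cases h.1; rfl⟩

/-- separation lemma: a walk starting in `S` that avoids `c` stays in `S`,
provided all neighbours of `S` lie in `insert c S`. -/
lemma sep {S : Set GV} {c : GV}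
    (hS : ∀ u ∈ S, ∀ z, GraphG.Adj u z → z = c ∨ z ∈ S) :
    ∀ {x y : GV} (p : GraphG.Walk x y), x ∈ S → c ∉ p.support → y ∈ S := by
  intro x y p
  induction p with
  | nil => exact fun h _ => h
  | @cons x w y h p ih =>
    intro hx hc
    have hc' : c ∉ p.support := fun hcc => hc (by simp [Walk.support_cons, hcc])
    rcases hS _ hx _ h with h1 | h1
    · subst h1
      exact absurd p.start_mem_support hc'
    · exact ih h1 hc'

/-- graph hom from a vertex-deleted subgraph-coe to the ambient graph. -/
def delHom (H : GraphG.Subgraph) (v : H.verts) : (H.coe.induce {w | w ≠ v}) →g GraphG where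
  toFun z := (z.1 : GV)
  map_rel' := fun h => H.adj_sub h

lemma exists_avoiding_walk (H : GraphG.Subgraph) (h2 : TwoConnected H.coe)
    {u y : GV} (hu : u ∈ H.verts) (hy : y ∈ H.verts) (c : GV)
    (huc : u ≠ c) (hyc : y ≠ c) :
    ∃ p : GraphG.Walk u y, c ∉ p.support := by
  by_cases hc : c ∈ H.verts
  · obtain ⟨-, -, hdel⟩ := h2
    have hu' : (⟨u, hu⟩ : H.verts) ∈ {w : H.verts | w ≠ ⟨c, hc⟩} :=
      fun h => huc (congrArg Subtype.val h)
    have hy' : (⟨y, hy⟩ : H.verts) ∈ {w : H.verts | w ≠ ⟨c, hc⟩} :=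
      fun h => hyc (congrArg Subtype.val h)
    obtain ⟨p⟩ := (hdel ⟨c, hc⟩).preconnected ⟨⟨u, hu⟩, hu'⟩ ⟨⟨y, hy⟩, hy'⟩
    refine ⟨p.map (delHom H ⟨c, hc⟩), ?_⟩
    show c ∉ (p.map (delHom H ⟨c, hc⟩)).support
    rw [Walk.support_map]
    intro hmem
    obtain ⟨z, hz, hzc⟩ := List.mem_map.mp hmem
    exact z.2 (Subtype.ext hzc)
  · obtain ⟨-, hconn, -⟩ := h2
    obtain ⟨p⟩ := hconn.preconnected ⟨u, hu⟩ ⟨y, hy⟩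
    refine ⟨p.map H.hom, ?_⟩
    show c ∉ (p.map H.hom).support
    rw [Walk.support_map]
    intro hmem
    obtain ⟨z, hz, hzc⟩ := List.mem_map.mp hmem
    exact hc (hzc ▸ z.2)

lemma verts_subset (H : GraphG.Subgraph) (h2 : TwoConnected H.coe)
    (inner : Set GV) (c : GV)
    (hnbr : ∀ u ∈ inner, ∀ z, GraphG.Adj u z → z = c ∨ z ∈ inner)
    (hcin : c ∉ inner)
    {u : GV} (hu : u ∈ H.verts) (hui : u ∈ inner) :
    H.verts ⊆ insert c inner := by
  intro y hy
  by_cases hyc : y = c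
  · exact hyc ▸ Set.mem_insert _ _
  refine Set.mem_insert_iff.mpr (Or.inr ?_)
  have huc : u ≠ c := fun h => hcin (h ▸ hui)
  obtain ⟨p, hp⟩ := exists_avoiding_walk H h2 hu hy c huc hyc
  exact sep hnbr p hui hp

lemma le_induce_of_verts (H : GraphG.Subgraph) {S : Set GV} (h : H.verts ⊆ S) :
    H ≤ (⊤ : GraphG.Subgraph).induce S := by
  constructor
  · exact h
  · intro v w hvw
    exact ⟨h (H.edge_vert hvw), h (H.edge_vert hvw.symm), H.adj_sub hvw⟩

/-- Part 1 of the statement. -/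
lemma part1 (H : GraphG.Subgraph) (h2 : TwoConnected H.coe) :
    H ≤ gridSub ∨ (∃ a, H ≤ k5Sub a) ∨ (∃ b, H ≤ k33Sub b) := by
  by_cases hg : ∀ u ∈ H.verts, u ∈ Set.range (Sum.inl : ℤ × ℕ → GV)
  · exact Or.inl (le_induce_of_verts H hg)
  · push_neg at hg
    obtain ⟨u, hu, hun⟩ := hg
    rcases u with p | (⟨a, i⟩ | ⟨b, i⟩)
    · exact absurd ⟨p, rfl⟩ hun
    · refine Or.inr (Or.inl ⟨a, le_induce_of_verts H ?_⟩)
      rw [K5copy_eq]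
      exact verts_subset H h2 (K5inner a) _ (fun u hu z h => k5_nbr hu h)
        (by rintro ⟨i, h⟩; exact absurd h (by simp)) hu ⟨i, rfl⟩
    · refine Or.inr (Or.inr ⟨b, le_induce_of_verts H ?_⟩)
      rw [K33copy_eq]
      exact verts_subset H h2 (K33inner b) _ (fun u hu z h => k33_nbr hu h)
        (by rintro ⟨i, h⟩; exact absurd h (by simp)) hu ⟨i, rfl⟩

/-! #### Walks in the grid -/

lemma adjU (x : ℤ) (n : ℕ) : GraphG.Adj (Sum.inl (x, n)) (Sum.inl (x, n + 1)) :=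
  gadj (by simp) (Or.inl (Or.inr ⟨rfl, rfl⟩))

lemma adjR (x : ℤ) (n : ℕ) : GraphG.Adj (Sum.inl (x, n)) (Sum.inl (x + 1, n)) :=
  gadj (by simp) (Or.inl (Or.inl ⟨rfl, rfl⟩))

lemma walk_up (x : ℤ) (m : ℕ) :
    ∀ k : ℕ, ∃ p : GraphG.Walk (Sum.inl (x, m)) (Sum.inl (x, m + k)),
      ∀ z ∈ p.support, ∃ j : ℕ, m ≤ j ∧ j ≤ m + k ∧ z = Sum.inl (x, j) := by
  intro k
  induction k with
  | zero =>
    exact ⟨Walk.nil, fun z hz => ⟨m, le_rfl, Nat.le_add_right _ _, by simpa using hz⟩⟩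
  | succ k ih =>
    obtain ⟨p, hp⟩ := ih
    refine ⟨p.concat (adjU x (m + k)), ?_⟩
    intro z hz
    rw [Walk.support_concat] at hz
    simp only [List.concat_eq_append, List.mem_append, List.mem_singleton] at hz
    rcases hz with hz | rfl
    · obtain ⟨j, h1, h2, h3⟩ := hp z hz
      exact ⟨j, h1, by omega, h3⟩
    · exact ⟨m + k + 1, by omega, by omega, rfl⟩

lemma walk_up' (x : ℤ) (m N : ℕ) (h : m ≤ N) :
    ∃ w : GraphG.Walk (Sum.inl (x, m)) (Sum.inl (x, N)),
      ∀ z ∈ w.support, ∃ j : ℕ, m ≤ j ∧ j ≤ N ∧ z = Sum.inl (x, j) := by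
  obtain ⟨p, hp⟩ := walk_up x m (N - m)
  have he : (Sum.inl (x, m + (N - m)) : GV) = Sum.inl (x, N) := by
    rw [Nat.add_sub_cancel' h]
  refine ⟨p.copy rfl he, ?_⟩
  intro z hz
  rw [Walk.support_copy] at hz
  obtain ⟨j, h1, h2, h3⟩ := hp z hz
  exact ⟨j, h1, by omega, h3⟩

lemma walk_right (x : ℤ) (n : ℕ) :
    ∀ k : ℕ, ∃ p : GraphG.Walk (Sum.inl (x, n)) (Sum.inl (x + (k : ℤ), n)),
      ∀ z ∈ p.support, ∃ j : ℕ, j ≤ k ∧ z = Sum.inl (x + (j : ℤ), n) := by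
  intro k
  induction k with
  | zero =>
    have he : (Sum.inl (x, n) : GV) = Sum.inl (x + ((0 : ℕ) : ℤ), n) := by norm_num
    refine ⟨Walk.nil.copy rfl he, ?_⟩
    intro z hz
    rw [Walk.support_copy] at hz
    exact ⟨0, le_rfl, by rw [← he]; simpa using hz⟩
  | succ k ih =>
    obtain ⟨p, hp⟩ := ih
    have he : (Sum.inl (x + (k : ℤ) + 1, n) : GV) = Sum.inl (x + ((k + 1 : ℕ) : ℤ), n) := by
      rw [show x + (k : ℤ) + 1 = x + ((k + 1 : ℕ) : ℤ) from by push_cast; ring]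
    refine ⟨(p.concat (adjR (x + (k : ℤ)) n)).copy rfl he, ?_⟩
    intro z hz
    rw [Walk.support_copy, Walk.support_concat] at hz
    simp only [List.concat_eq_append, List.mem_append, List.mem_singleton] at hz
    rcases hz with hz | rfl
    · obtain ⟨j, h1, h3⟩ := hp z hz
      exact ⟨j, by omega, h3⟩
    · exact ⟨k + 1, le_rfl, by rw [← he]⟩

lemma walk_horiz (x y : ℤ) (n : ℕ) :
    ∃ p : GraphG.Walk (Sum.inl (x, n)) (Sum.inl (y, n)),
      ∀ z ∈ p.support, ∃ t : ℤ, min x y ≤ t ∧ t ≤ max x y ∧ z = Sum.inl (t, n) := by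
  rcases le_total x y with h | h
  · obtain ⟨p, hp⟩ := walk_right x n (y - x).toNat
    have he : (Sum.inl (x + (((y - x).toNat : ℕ) : ℤ), n) : GV) = Sum.inl (y, n) := by
      rw [show x + (((y - x).toNat : ℕ) : ℤ) = y from by omega]
    refine ⟨p.copy rfl he, ?_⟩
    intro z hz
    rw [Walk.support_copy] at hz
    obtain ⟨j, hj, h3⟩ := hp z hz
    exact ⟨x + (j : ℤ), by omega, by omega, h3⟩
  · obtain ⟨p, hp⟩ := walk_right y n (x - y).toNat
    have he : (Sum.inl (y + (((x - y).toNat : ℕ) : ℤ), n) : GV) = Sum.inl (x, n) := by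
      rw [show y + (((x - y).toNat : ℕ) : ℤ) = x from by omega]
    refine ⟨(p.copy rfl he).reverse, ?_⟩
    intro z hz
    rw [Walk.support_reverse, List.mem_reverse, Walk.support_copy] at hz
    obtain ⟨j, hj, h3⟩ := hp z hz
    exact ⟨y + (j : ℤ), by omega, by omega, h3⟩

lemma grid_walk (p q : ℤ × ℕ) :
    ∃ w : GraphG.Walk (Sum.inl p) (Sum.inl q),
      ∀ z ∈ w.support, ∃ r : ℤ × ℕ, z = Sum.inl r := by
  obtain ⟨p1, p2⟩ := p
  obtain ⟨q1, q2⟩ := q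
  obtain ⟨w1, hw1⟩ := walk_up' p1 p2 (max p2 q2) (le_max_left _ _)
  obtain ⟨wh, hwh⟩ := walk_horiz p1 q1 (max p2 q2)
  obtain ⟨w2, hw2⟩ := walk_up' q1 q2 (max p2 q2) (le_max_right _ _)
  refine ⟨w1.append (wh.append w2.reverse), ?_⟩
  intro z hz
  rw [Walk.mem_support_append_iff, Walk.mem_support_append_iff, Walk.support_reverse,
    List.mem_reverse] at hz
  rcases hz with hz | hz | hz
  · obtain ⟨j, -, -, rfl⟩ := hw1 z hz; exact ⟨_, rfl⟩
  · obtain ⟨t, -, -, rfl⟩ := hwh z hz; exact ⟨_, rfl⟩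
  · obtain ⟨j, -, -, rfl⟩ := hw2 z hz; exact ⟨_, rfl⟩

lemma grid_avoid_half (p v : ℤ × ℕ) (hp : p ≠ v) (N : ℕ) (hvN : v.2 < N) (hpN : p.2 ≤ N) :
    ∃ (t : ℤ) (w : GraphG.Walk (Sum.inl p) (Sum.inl (t, N))),
      ∀ z ∈ w.support, ∃ r : ℤ × ℕ, z = Sum.inl r ∧ r ≠ v := by
  obtain ⟨p1, p2⟩ := p
  obtain ⟨v1, v2⟩ := v
  simp only [ne_eq, Prod.mk.injEq, not_and] at hp
  by_cases h1 : p1 = v1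
  · have h2 : p2 ≠ v2 := hp h1
    rcases lt_or_gt_of_ne h2 with hlt | hgt
    · obtain ⟨w, hw⟩ := walk_up' (p1 + 1) p2 N hpN
      refine ⟨p1 + 1, Walk.cons (adjR p1 p2) w, ?_⟩
      intro z hz
      rw [Walk.support_cons] at hz
      rcases List.mem_cons.mp hz with rfl | hz
      · exact ⟨(p1, p2), rfl, fun h => by rw [Prod.mk.injEq] at h; omega⟩
      · obtain ⟨j, -, -, rfl⟩ := hw z hz
        exact ⟨(p1 + 1, j), rfl, fun h => by rw [Prod.mk.injEq] at h; omega⟩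
    · obtain ⟨w, hw⟩ := walk_up' p1 p2 N hpN
      refine ⟨p1, w, ?_⟩
      intro z hz
      obtain ⟨j, hj1, -, rfl⟩ := hw z hz
      exact ⟨(p1, j), rfl, fun h => by rw [Prod.mk.injEq] at h; omega⟩
  · obtain ⟨w, hw⟩ := walk_up' p1 p2 N hpN
    refine ⟨p1, w, ?_⟩
    intro z hz
    obtain ⟨j, -, -, rfl⟩ := hw z hz
    exact ⟨(p1, j), rfl, fun h => by rw [Prod.mk.injEq] at h; exact h1 h.1⟩

lemma grid_avoid (p q v : ℤ × ℕ) (hp : p ≠ v) (hq : q ≠ v) :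
    ∃ w : GraphG.Walk (Sum.inl p) (Sum.inl q),
      ∀ z ∈ w.support, ∃ r : ℤ × ℕ, z = Sum.inl r ∧ r ≠ v := by
  set N := max (max p.2 q.2) (v.2 + 1) with hN
  obtain ⟨t1, w1, hw1⟩ := grid_avoid_half p v hp N (by omega) (by omega)
  obtain ⟨t2, w2, hw2⟩ := grid_avoid_half q v hq N (by omega) (by omega)
  obtain ⟨wh, hwh⟩ := walk_horiz t1 t2 N
  refine ⟨w1.append (wh.append w2.reverse), ?_⟩
  intro z hz
  rw [Walk.mem_support_append_iff, Walk.mem_support_append_iff, Walk.support_reverse,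
    List.mem_reverse] at hz
  rcases hz with hz | hz | hz
  · exact hw1 z hz
  · obtain ⟨t, -, -, rfl⟩ := hwh z hz
    exact ⟨(t, N), rfl, fun h => by rw [Prod.mk.injEq] at h; omega⟩
  · exact hw2 z hz

/-! #### From ambient walks to reachability in subgraph coercions -/

lemma reach_coe {S : Set GV} :
    ∀ {x y : GV} (p : GraphG.Walk x y) (hx : x ∈ S) (hy : y ∈ S),
      (∀ z ∈ p.support, z ∈ S) →
      (((⊤ : GraphG.Subgraph).induce S).coe).Reachable ⟨x, hx⟩ ⟨y, hy⟩ := by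
  intro x y p
  induction p with
  | nil => exact fun hx hy _ => Reachable.refl _
  | @cons x w y h p ih =>
    intro hx hy hs
    have hw : w ∈ S := hs w (by simp [Walk.support_cons, p.start_mem_support])
    have hadj : (((⊤ : GraphG.Subgraph).induce S).coe).Adj ⟨x, hx⟩ ⟨w, hw⟩ := ⟨hx, hw, h⟩
    exact hadj.reachable.trans
      (ih hw hy (fun z hz => hs z (by simp [Walk.support_cons, hz])))

lemma reach_coe_del {S : Set GV} (v : ↥S) :
    ∀ {x y : GV} (p : GraphG.Walk x y) (hx : x ∈ S) (hy : y ∈ S)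
      (hxv : (⟨x, hx⟩ : ↥S) ≠ v) (hyv : (⟨y, hy⟩ : ↥S) ≠ v),
      (∀ z ∈ p.support, z ∈ S ∧ z ≠ (v : GV)) →
      ((((⊤ : GraphG.Subgraph).induce S).coe).induce {w | w ≠ v}).Reachable
        ⟨⟨x, hx⟩, hxv⟩ ⟨⟨y, hy⟩, hyv⟩ := by
  intro x y p
  induction p with
  | nil => exact fun hx hy hxv hyv _ => Reachable.refl _
  | @cons x w y h p ih =>
    intro hx hy hxv hyv hs
    obtain ⟨hw, hwv⟩ := hs w (by simp [Walk.support_cons, p.start_mem_support])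
    have hwv' : (⟨w, hw⟩ : ↥S) ≠ v := fun hh => hwv (congrArg Subtype.val hh)
    have hadj : ((((⊤ : GraphG.Subgraph).induce S).coe).induce {w | w ≠ v}).Adj
        ⟨⟨x, hx⟩, hxv⟩ ⟨⟨w, hw⟩, hwv'⟩ := ⟨hx, hw, h⟩
    exact hadj.reachable.trans
      (ih hw hy hwv' hyv (fun z hz => hs z (by simp [Walk.support_cons, hz])))

/-! #### Generic connectivity lemmas -/

lemma connected_of_complete {V : Type*} (G : SimpleGraph V) (hne : Nonempty V)
    (h : ∀ u v : V, u ≠ v → G.Adj u v) : G.Connected := by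
  rw [connected_iff]
  refine ⟨fun u v => ?_, hne⟩
  by_cases huv : u = v
  · exact huv ▸ Reachable.refl u
  · exact (h u v huv).reachable

lemma connected_bip {V : Type*} (G : SimpleGraph V) (L R : Set V)
    (hcov : ∀ v, v ∈ L ∨ v ∈ R) (hL : L.Nonempty) (hR : R.Nonempty)
    (hadj : ∀ l ∈ L, ∀ r ∈ R, G.Adj l r) : G.Connected := by
  obtain ⟨r0, hr0⟩ := hR
  obtain ⟨l0, hl0⟩ := hL
  rw [connected_iff_exists_forall_reachable]
  refine ⟨r0, fun w => ?_⟩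
  rcases hcov w with h | h
  · exact (hadj w h r0 hr0).reachable.symm
  · exact (hadj l0 hl0 r0 hr0).reachable.symm.trans (hadj l0 hl0 w h).reachable

/-! #### Adjacency inside the copies -/

lemma mem_k5copy_inner (a : NegInt) (i : Fin 4) :
    (Sum.inr (Sum.inl (a, i)) : GV) ∈ K5copy a :=
  Set.mem_union_right _ ⟨i, rfl⟩

lemma mem_k5copy_c (a : NegInt) : (Sum.inl (a.1, 0) : GV) ∈ K5copy a :=
  Set.mem_union_left _ rfl

lemma mem_k33copy_inner (b : NonnegInt) (i : Fin 5) :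
    (Sum.inr (Sum.inr (b, i)) : GV) ∈ K33copy b :=
  Set.mem_union_right _ ⟨i, rfl⟩

lemma k5copy_adj {a : NegInt} {x y : GV} (hx : x ∈ K5copy a) (hy : y ∈ K5copy a)
    (hxy : x ≠ y) : GraphG.Adj x y := by
  rcases hx with hx | ⟨i, rfl⟩ <;> rcases hy with hy | ⟨j, rfl⟩
  · exact absurd (hx.trans hy.symm) hxy
  · rw [Set.mem_singleton_iff] at hx; subst hx
    exact gadj hxy (Or.inl rfl)
  · rw [Set.mem_singleton_iff] at hy; subst hy
    exact gadj hxy (Or.inr rfl)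
  · exact gadj hxy (Or.inl rfl)

def f33 (b : NonnegInt) (i : Fin 5) : GV := Sum.inr (Sum.inr (b, i))

lemma grel_cf {b : NonnegInt} {j : Fin 5} (hj : 2 ≤ (j : ℕ)) :
    GRel (Sum.inl (b.1, 0)) (f33 b j) := ⟨rfl, hj⟩

lemma grel_ff {b : NonnegInt} {i j : Fin 5} (hi : (i : ℕ) < 2) (hj : 2 ≤ (j : ℕ)) :
    GRel (f33 b i) (f33 b j) := ⟨rfl, hi, hj⟩

lemma k33_left_right_adj {b : NonnegInt} {x y : GV}
    (hx : x = Sum.inl (b.1, 0) ∨ x = f33 b 0 ∨ x = f33 b 1)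
    (hy : y = f33 b 2 ∨ y = f33 b 3 ∨ y = f33 b 4) : GraphG.Adj x y := by
  rcases hx with rfl | rfl | rfl <;> rcases hy with rfl | rfl | rfl <;>
    first
      | exact gadj (by simp [f33]) (Or.inl (grel_cf (by decide)))
      | exact gadj (by simp [f33]) (Or.inl (grel_ff (by decide) (by decide)))

lemma k33_cover {b : NonnegInt} {x : GV} (hx : x ∈ K33copy b) :
    (x = Sum.inl (b.1, 0) ∨ x = f33 b 0 ∨ x = f33 b 1) ∨
      (x = f33 b 2 ∨ x = f33 b 3 ∨ x = f33 b 4) := by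
  rcases hx with hx | ⟨i, rfl⟩
  · rw [Set.mem_singleton_iff] at hx; exact Or.inl (Or.inl hx)
  · fin_cases i <;> simp [f33]

/-! #### Two-connectedness of the three pieces -/

lemma twoConnected_k5 (a : NegInt) : TwoConnected (k5Sub a).coe := by
  refine ⟨⟨⟨_, mem_k5copy_inner a 0⟩, ⟨_, mem_k5copy_inner a 1⟩, ⟨_, mem_k5copy_inner a 2⟩,
    by simp [Subtype.ext_iff], by simp [Subtype.ext_iff], by simp [Subtype.ext_iff]⟩, ?_, ?_⟩
  · exact connected_of_complete _ ⟨⟨_, mem_k5copy_c a⟩⟩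
      (fun u v huv => ⟨u.2, v.2, k5copy_adj u.2 v.2 (fun h => huv (Subtype.ext h))⟩)
  · intro v
    refine connected_of_complete _ ?_ (fun u w huw =>
      ⟨u.1.2, w.1.2, k5copy_adj u.1.2 w.1.2
        (fun h => huw (Subtype.ext (Subtype.ext h)))⟩)
    by_cases hv : (v : GV) = Sum.inr (Sum.inl (a, 0))
    · refine ⟨⟨⟨_, mem_k5copy_inner a 1⟩, fun h => ?_⟩⟩
      have := congrArg Subtype.val h
      rw [hv] at this
      simp at this
    · exact ⟨⟨⟨_, mem_k5copy_inner a 0⟩, fun h => hv (congrArg Subtype.val h).symm⟩⟩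

lemma twoConnected_k33 (b : NonnegInt) : TwoConnected (k33Sub b).coe := by
  refine ⟨⟨⟨_, mem_k33copy_inner b 0⟩, ⟨_, mem_k33copy_inner b 1⟩, ⟨_, mem_k33copy_inner b 2⟩,
    by simp [Subtype.ext_iff], by simp [Subtype.ext_iff], by simp [Subtype.ext_iff]⟩, ?_, ?_⟩
  · refine connected_bip _
      {w : ↥(K33copy b) | (w : GV) = Sum.inl (b.1, 0) ∨ (w : GV) = f33 b 0 ∨ (w : GV) = f33 b 1}
      {w : ↥(K33copy b) | (w : GV) = f33 b 2 ∨ (w : GV) = f33 b 3 ∨ (w : GV) = f33 b 4}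
      (fun w => k33_cover w.2)
      ⟨⟨_, mem_k33copy_inner b 0⟩, Or.inr (Or.inl rfl)⟩
      ⟨⟨_, mem_k33copy_inner b 2⟩, Or.inl rfl⟩
      (fun l hl r hr => ⟨l.2, r.2, k33_left_right_adj hl hr⟩)
  · intro v
    refine connected_bip _
      {w | (w.1.1 : GV) = Sum.inl (b.1, 0) ∨ (w.1.1 : GV) = f33 b 0 ∨ (w.1.1 : GV) = f33 b 1}
      {w | (w.1.1 : GV) = f33 b 2 ∨ (w.1.1 : GV) = f33 b 3 ∨ (w.1.1 : GV) = f33 b 4}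
      (fun w => k33_cover w.1.2) ?_ ?_
      (fun l hl r hr => ⟨l.1.2, r.1.2, k33_left_right_adj hl hr⟩)
    · by_cases hv : (v : GV) = f33 b 0
      · refine ⟨⟨⟨_, mem_k33copy_inner b 1⟩, fun h => ?_⟩, Or.inr (Or.inr rfl)⟩
        have := congrArg Subtype.val h
        rw [hv] at this
        simp [f33] at this
      · exact ⟨⟨⟨_, mem_k33copy_inner b 0⟩,
          fun h => hv (congrArg Subtype.val h).symm⟩, Or.inr (Or.inl rfl)⟩
    · by_cases hv : (v : GV) = f33 b 2
      · refine ⟨⟨⟨_, mem_k33copy_inner b 3⟩, fun h => ?_⟩, Or.inr (Or.inl rfl)⟩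
        have := congrArg Subtype.val h
        rw [hv] at this
        simp [f33] at this
      · exact ⟨⟨⟨_, mem_k33copy_inner b 2⟩,
          fun h => hv (congrArg Subtype.val h).symm⟩, Or.inl rfl⟩

lemma twoConnected_grid : TwoConnected gridSub.coe := by
  refine ⟨⟨⟨Sum.inl (0, 0), ⟨(0, 0), rfl⟩⟩, ⟨Sum.inl (0, 1), ⟨(0, 1), rfl⟩⟩,
    ⟨Sum.inl (1, 0), ⟨(1, 0), rfl⟩⟩, by simp [Subtype.ext_iff, Prod.ext_iff],
    by simp [Subtype.ext_iff, Prod.ext_iff], by simp [Subtype.ext_iff, Prod.ext_iff]⟩, ?_, ?_⟩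
  · rw [connected_iff]
    refine ⟨?_, ⟨⟨Sum.inl (0, 0), ⟨(0, 0), rfl⟩⟩⟩⟩
    rintro ⟨u, p, rfl⟩ ⟨w, q, rfl⟩
    obtain ⟨wk, hwk⟩ := grid_walk p q
    exact reach_coe (S := Set.range Sum.inl) wk ⟨p, rfl⟩ ⟨q, rfl⟩
      (fun z hz => by obtain ⟨r, rfl⟩ := hwk z hz; exact ⟨r, rfl⟩)
  · intro v
    obtain ⟨vv, hv⟩ := v
    obtain ⟨pv, rfl⟩ := hv
    rw [connected_iff]
    constructor
    · rintro ⟨⟨u, p, rfl⟩, hup⟩ ⟨⟨w, q, rfl⟩, hwq⟩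
      have hpv : p ≠ pv := fun h => hup (Subtype.ext (congrArg Sum.inl h))
      have hqv : q ≠ pv := fun h => hwq (Subtype.ext (congrArg Sum.inl h))
      obtain ⟨wk, hwk⟩ := grid_avoid p q pv hpv hqv
      exact reach_coe_del (S := Set.range Sum.inl) ⟨Sum.inl pv, ⟨pv, rfl⟩⟩ wk ⟨p, rfl⟩ ⟨q, rfl⟩ hup hwq
        (fun z hz => by
          obtain ⟨r, rfl, hrv⟩ := hwk z hz
          exact ⟨⟨r, rfl⟩, fun hh => hrv (Sum.inl_injective hh)⟩)
    · by_cases h0 : pv = (0, 0)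
      · refine ⟨⟨⟨Sum.inl (0, 1), ⟨(0, 1), rfl⟩⟩, fun h => ?_⟩⟩
        have := congrArg Subtype.val h
        rw [h0] at this
        simp at this
      · exact ⟨⟨⟨Sum.inl (0, 0), ⟨(0, 0), rfl⟩⟩,
          fun h => h0 (Sum.inl_injective (congrArg Subtype.val h)).symm⟩⟩

end Statement11Aux

/-- Every 2-connected subgraph of `G` is contained in the half-grid
subgraph, in an attached `K₅`, or in an attached `K₃,₃`; consequently the maximal
2-connected subgraphs of `G` are exactly the half-grid together with the attached
`K₅`-subgraphs and the attached `K₃,₃`-subgraphs. -/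
theorem statement11 :
    (∀ H : GraphG.Subgraph, TwoConnected H.coe →
        H ≤ gridSub ∨ (∃ a, H ≤ k5Sub a) ∨ (∃ b, H ≤ k33Sub b)) ∧
    {H : GraphG.Subgraph | TwoConnected H.coe ∧
        ∀ H' : GraphG.Subgraph, TwoConnected H'.coe → H ≤ H' → H' = H}
      = insert gridSub (Set.range k5Sub ∪ Set.range k33Sub) := by
  open Statement11Aux in
  refine ⟨part1, ?_⟩
  ext H
  simp only [Set.mem_setOf_eq, Set.mem_insert_iff, Set.mem_union, Set.mem_range]
  constructor
  · rintro ⟨h2, hmax⟩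
    rcases part1 H h2 with h | ⟨a, h⟩ | ⟨b, h⟩
    · exact Or.inl (hmax gridSub twoConnected_grid h).symm
    · exact Or.inr (Or.inl ⟨a, hmax _ (twoConnected_k5 a) h⟩)
    · exact Or.inr (Or.inr ⟨b, hmax _ (twoConnected_k33 b) h⟩)
  · rintro (rfl | ⟨a, rfl⟩ | ⟨b, rfl⟩)
    · refine ⟨twoConnected_grid, fun H' h2' hle => ?_⟩
      rcases part1 H' h2' with h | ⟨a, h⟩ | ⟨b, h⟩
      · exact le_antisymm h hle
      · exfalso
        have hx := h.1 (hle.1 (⟨(0, 1), rfl⟩ : (Sum.inl ((0 : ℤ), (1 : ℕ)) : GV) ∈ gridSub.verts))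
        rcases hx with hx | ⟨i, hx⟩
        · rw [Set.mem_singleton_iff] at hx
          have := Sum.inl_injective hx
          rw [Prod.mk.injEq] at this
          exact absurd this.2 one_ne_zero
        · exact Sum.inl_ne_inr hx
      · exfalso
        have hx := h.1 (hle.1 (⟨(0, 1), rfl⟩ : (Sum.inl ((0 : ℤ), (1 : ℕ)) : GV) ∈ gridSub.verts))
        rcases hx with hx | ⟨i, hx⟩
        · rw [Set.mem_singleton_iff] at hx
          have := Sum.inl_injective hx
          rw [Prod.mk.injEq] at this
          exact absurd this.2 one_ne_zero
        · exact Sum.inl_ne_inr hx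
    · refine ⟨twoConnected_k5 a, fun H' h2' hle => ?_⟩
      rcases part1 H' h2' with h | ⟨a', h⟩ | ⟨b', h⟩
      · exfalso
        obtain ⟨r, hr⟩ := h.1 (hle.1 (mem_k5copy_inner a 0))
        exact Sum.inl_ne_inr hr
      · have hx := h.1 (hle.1 (mem_k5copy_inner a 0))
        rcases hx with hx | ⟨i, hx⟩
        · exact absurd hx (by simp)
        · have : a = a' := by
            have := Sum.inr_injective hx
            have := Sum.inl_injective this
            rw [Prod.mk.injEq] at this
            exact this.1
          subst this
          exact le_antisymm h hle
      · exfalso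
        have hx := h.1 (hle.1 (mem_k5copy_inner a 0))
        rcases hx with hx | ⟨i, hx⟩
        · exact absurd hx (by simp)
        · have := Sum.inr_injective hx
          exact Sum.inl_ne_inr this
    · refine ⟨twoConnected_k33 b, fun H' h2' hle => ?_⟩
      rcases part1 H' h2' with h | ⟨a', h⟩ | ⟨b', h⟩
      · exfalso
        obtain ⟨r, hr⟩ := h.1 (hle.1 (mem_k33copy_inner b 0))
        exact Sum.inl_ne_inr hr
      · exfalso
        have hx := h.1 (hle.1 (mem_k33copy_inner b 0))
        rcases hx with hx | ⟨i, hx⟩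
        · exact absurd hx (by simp)
        · have := Sum.inr_injective hx
          exact Sum.inr_ne_inl this
      · have hx := h.1 (hle.1 (mem_k33copy_inner b 0))
        rcases hx with hx | ⟨i, hx⟩
        · exact absurd hx (by simp)
        · have : b = b' := by
            have := Sum.inr_injective hx
            have := Sum.inr_injective this
            rw [Prod.mk.injEq] at this
            exact this.1
          subst this
          exact le_antisymm h hle
end
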